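/- arXiv:1307.1839 — 5 statements merged into one kernel-verified Lean document; each statement's English description precedes it below -/
import Mathlib

section
/- Let A be the free associative K-algebra on d generators of degree 1, and let I be the homogeneous ideal generated by homogeneous elements f_1, f_2, … with r_i elements of degree i (r_1 = 0). If for infinitely many natural numbers m there exists a real number t_m > 0 such that 1 - d·t_m + Σ_{i=2}^{m} r_i·t_m^i < 0, then A/I is infinite dimensional over K. -/
open FreeAlgebra Submodule Module

namespace GSaux

variable (K : Type*) [Field K] (d : ℕ)

noncomputable def Bw (l : FreeMonoid (Fin d)) : FreeAlgebra K (Fin d) :=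
  ((FreeMonoid.toList l).map (ι K)).prod

theorem Bw_eq_basis (l : FreeMonoid (Fin d)) : Bw K d l = basisFreeMonoid K (Fin d) l := by
  simp only [Bw, basisFreeMonoid, Module.Basis.map_apply, Finsupp.coe_basisSingleOne]
  simp [LinearEquiv.trans_symm, equivMonoidAlgebraFreeMonoid, FreeMonoid.lift_apply]

noncomputable def Vd : Submodule K (FreeAlgebra K (Fin d)) :=
  Submodule.span K (Set.range (ι K))

theorem pow_eq_span_words (n : ℕ) :
    (Vd K d) ^ n
      = span K (Bw K d '' {l : FreeMonoid (Fin d) | (FreeMonoid.toList l).length = n}) := by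
  induction n with
  | zero =>
    rw [pow_zero, Submodule.one_eq_span]
    congr 1
    ext x
    constructor
    · rintro rfl; exact ⟨1, rfl, rfl⟩
    · rintro ⟨l, hl, rfl⟩
      have : FreeMonoid.toList l = [] := List.length_eq_zero_iff.mp hl
      simp [Bw, this]
  | succ n ih =>
    rw [pow_succ']
    rw [ih, Vd, Submodule.span_mul_span]
    congr 1
    ext x
    constructor
    · rintro ⟨v, ⟨i, rfl⟩, w, ⟨l, hl, rfl⟩, rfl⟩
      exact ⟨FreeMonoid.of i * l, by simpa using hl, by simp [Bw]⟩
    · rintro ⟨l, hl, rfl⟩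
      rcases hx : FreeMonoid.toList l with _ | ⟨a, as⟩
      · simp [hx] at hl
      · refine ⟨ι K a, ⟨a, rfl⟩, Bw K d (FreeMonoid.ofList as), ⟨_, ?_, rfl⟩, ?_⟩
        · simpa [hx] using hl
        · simp [Bw, hx]

noncomputable def wordsFun (n : ℕ) : (Fin n → Fin d) → FreeAlgebra K (Fin d) :=
  fun f => Bw K d (FreeMonoid.ofList (List.ofFn f))

theorem pow_eq_span_range (n : ℕ) :
    (Vd K d) ^ n = span K (Set.range (wordsFun K d n)) := by
  rw [pow_eq_span_words]
  congr 1
  ext x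
  constructor
  · rintro ⟨l, hl, rfl⟩
    subst hl
    refine ⟨fun i => (FreeMonoid.toList l).get i, ?_⟩
    simp only [wordsFun]
    congr 1
    apply FreeMonoid.toList.injective
    simp [List.ofFn_get]
  · rintro ⟨f, rfl⟩
    exact ⟨FreeMonoid.ofList (List.ofFn f), by simp, rfl⟩

instance pow_fd (n : ℕ) : FiniteDimensional K ((Vd K d) ^ n : Submodule K (FreeAlgebra K (Fin d))) := by
  rw [pow_eq_span_range]
  exact FiniteDimensional.span_of_finite K (Set.finite_range _)

theorem finrank_pow (n : ℕ) :
    finrank K ((Vd K d) ^ n : Submodule K (FreeAlgebra K (Fin d))) = d ^ n := by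
  rw [pow_eq_span_range]
  have hinj : Function.Injective (fun f : Fin n → Fin d => (FreeMonoid.ofList (List.ofFn f))) := by
    intro f g h
    exact List.ofFn_injective (by simpa using h)
  have hli : LinearIndependent K (wordsFun K d n) := by
    have := (basisFreeMonoid K (Fin d)).linearIndependent.comp _ hinj
    convert this using 1
    funext f
    exact Bw_eq_basis K d _
    rfl
  rw [finrank_span_eq_card hli, Fintype.card_fun, Fintype.card_fin, Fintype.card_fin]

theorem iSup_pow_eq_top : (⨆ n, (Vd K d) ^ n) = ⊤ := by
  rw [eq_top_iff, ← (basisFreeMonoid K (Fin d)).span_eq]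
  rw [Submodule.span_le]
  rintro x ⟨l, rfl⟩
  have : basisFreeMonoid K (Fin d) l ∈ (Vd K d) ^ (FreeMonoid.toList l).length := by
    rw [pow_eq_span_words, ← Bw_eq_basis]
    exact subset_span ⟨l, rfl, rfl⟩
  exact Submodule.mem_iSup_of_mem _ this

open Classical in
noncomputable def filterLM (n : ℕ) :
    (FreeMonoid (Fin d) →₀ K) →ₗ[K] (FreeMonoid (Fin d) →₀ K) where
  toFun := Finsupp.filter (fun l : FreeMonoid (Fin d) => (FreeMonoid.toList l).length = n)
  map_add' := fun _ _ => Finsupp.filter_add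
  map_smul' := fun _ _ => Finsupp.filter_smul

/-- degree-`n` projection -/
noncomputable def pn (n : ℕ) : FreeAlgebra K (Fin d) →ₗ[K] FreeAlgebra K (Fin d) :=
  ((basisFreeMonoid K (Fin d)).repr.symm.toLinearMap.comp (filterLM K d n)).comp
    (basisFreeMonoid K (Fin d)).repr.toLinearMap

theorem pow_eq_span_basis (n : ℕ) :
    (Vd K d) ^ n
      = span K (⇑(basisFreeMonoid K (Fin d)) '' {l : FreeMonoid (Fin d) | (FreeMonoid.toList l).length = n}) := by
  rw [pow_eq_span_words]
  congr 1
  ext x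
  simp only [Set.mem_image]
  exact ⟨fun ⟨l,h1,h2⟩ => ⟨l, h1, by rw [← Bw_eq_basis]; exact h2⟩,
    fun ⟨l,h1,h2⟩ => ⟨l, h1, by rw [Bw_eq_basis]; exact h2⟩⟩

theorem pn_of_mem {n : ℕ} {x : FreeAlgebra K (Fin d)} (hx : x ∈ (Vd K d) ^ n) :
    pn K d n x = x := by
  classical
  have hs := (basisFreeMonoid K (Fin d)).repr_support_subset_of_mem_span
    {l : FreeMonoid (Fin d) | (FreeMonoid.toList l).length = n}
    (by rwa [← pow_eq_span_basis])
  have : Finsupp.filter (fun l : FreeMonoid (Fin d) => (FreeMonoid.toList l).length = n)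
      ((basisFreeMonoid K (Fin d)).repr x) = (basisFreeMonoid K (Fin d)).repr x := by
    ext a
    rw [Finsupp.filter_apply]
    split_ifs with h
    · rfl
    · by_contra hne
      exact h (hs (Finsupp.mem_support_iff.mpr (fun h0 => hne h0.symm)))
  simp only [pn, filterLM, LinearMap.comp_apply, LinearMap.coe_mk, AddHom.coe_mk,
    LinearEquiv.coe_toLinearMap]
  rw [this, LinearEquiv.symm_apply_apply]

theorem pn_of_mem_ne {n k : ℕ} (hk : k ≠ n) {x : FreeAlgebra K (Fin d)}
    (hx : x ∈ (Vd K d) ^ k) : pn K d n x = 0 := by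
  classical
  have hs := (basisFreeMonoid K (Fin d)).repr_support_subset_of_mem_span
    {l : FreeMonoid (Fin d) | (FreeMonoid.toList l).length = k}
    (by rwa [← pow_eq_span_basis])
  have : Finsupp.filter (fun l : FreeMonoid (Fin d) => (FreeMonoid.toList l).length = n)
      ((basisFreeMonoid K (Fin d)).repr x) = 0 := by
    ext a
    rw [Finsupp.filter_apply]
    simp only [Finsupp.coe_zero, Pi.zero_apply]
    split_ifs with h
    · by_contra hne
      have hmem := hs (Finsupp.mem_support_iff.mpr hne)
      exact hk ((Set.mem_setOf_eq ▸ hmem).symm.trans h)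
    · rfl
  simp only [pn, filterLM, LinearMap.comp_apply, LinearMap.coe_mk, AddHom.coe_mk,
    LinearEquiv.coe_toLinearMap]
  rw [this, map_zero]

variable (G : ℕ → Submodule K (FreeAlgebra K (Fin d))) (S : Set ℕ)

/-- degree-`n` piece of the ideal generated by pieces of `G` with degrees in `S`. -/
noncomputable def JJ (n : ℕ) : Submodule K (FreeAlgebra K (Fin d)) :=
  ⨆ (p : ℕ × ℕ × ℕ) (_ : p.1 + p.2.1 + p.2.2 = n ∧ p.2.1 ∈ S),
    (Vd K d) ^ p.1 * G p.2.1 * (Vd K d) ^ p.2.2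

noncomputable def TJ : Submodule K (FreeAlgebra K (Fin d)) := ⨆ n, JJ K d G S n

theorem term_le_JJ {j i k n : ℕ} (h : j + i + k = n) (hi : i ∈ S) :
    (Vd K d) ^ j * G i * (Vd K d) ^ k ≤ JJ K d G S n :=
  le_iSup_of_le (j, i, k) (le_iSup_of_le ⟨h, hi⟩ le_rfl)

theorem JJ_le_pow (hG : ∀ i, G i ≤ (Vd K d) ^ i) (n : ℕ) :
    JJ K d G S n ≤ (Vd K d) ^ n := by
  refine iSup_le fun p => iSup_le fun hp => ?_
  calc (Vd K d) ^ p.1 * G p.2.1 * (Vd K d) ^ p.2.2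
      ≤ (Vd K d) ^ p.1 * (Vd K d) ^ p.2.1 * (Vd K d) ^ p.2.2 :=
        mul_le_mul' (mul_le_mul' le_rfl (hG p.2.1)) le_rfl
    _ = (Vd K d) ^ n := by rw [← pow_add, ← pow_add, hp.1]

theorem mul_JJ (a n : ℕ) :
    (Vd K d) ^ a * JJ K d G S n ≤ JJ K d G S (a + n) := by
  rw [JJ, Submodule.mul_iSup]
  refine iSup_le fun p => ?_
  rw [Submodule.mul_iSup]
  refine iSup_le fun hp => ?_
  calc (Vd K d) ^ a * ((Vd K d) ^ p.1 * G p.2.1 * (Vd K d) ^ p.2.2)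
      = (Vd K d) ^ (a + p.1) * G p.2.1 * (Vd K d) ^ p.2.2 := by
        rw [pow_add, ← mul_assoc, ← mul_assoc]
    _ ≤ JJ K d G S (a + n) := term_le_JJ K d G S (by have := hp.1; omega) hp.2

theorem JJ_fd (hG : ∀ i, G i ≤ (Vd K d) ^ i) (n : ℕ) :
    FiniteDimensional K (JJ K d G S n) :=
  Submodule.finiteDimensional_of_le (JJ_le_pow K d G S hG n)

theorem pn_mem_TJ (hG : ∀ i, G i ≤ (Vd K d) ^ i) {x : FreeAlgebra K (Fin d)} (n : ℕ)
    (hx : x ∈ TJ K d G S) : pn K d n x ∈ JJ K d G S n := by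
  refine Submodule.iSup_induction _ (motive := fun y => pn K d n y ∈ JJ K d G S n) hx ?_ ?_ ?_
  · intro k y hy
    by_cases hkn : k = n
    · subst hkn
      rw [pn_of_mem K d (JJ_le_pow K d G S hG k hy)]
      exact hy
    · rw [pn_of_mem_ne K d hkn (JJ_le_pow K d G S hG k hy)]
      exact zero_mem _
  · show pn K d n 0 ∈ _
    rw [map_zero]; exact zero_mem _
  · intro y z hy hz
    show pn K d n (y + z) ∈ _
    rw [map_add]; exact add_mem hy hz

theorem span_eq_TJ (F : ℕ → Finset (FreeAlgebra K (Fin d))) :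
    span K {x : FreeAlgebra K (Fin d) |
        ∃ a s b : FreeAlgebra K (Fin d), (∃ i ∈ S, s ∈ F i) ∧ x = a * s * b}
      = TJ K d (fun i => span K ((F i : Set (FreeAlgebra K (Fin d))))) S := by
  apply le_antisymm
  · rw [Submodule.span_le]
    rintro x ⟨a, s, b, ⟨i, hiS, hsF⟩, rfl⟩
    have key : (⊤ : Submodule K (FreeAlgebra K (Fin d))) * span K {s} * ⊤ ≤ TJ K d (fun i => span K ((F i : Set (FreeAlgebra K (Fin d))))) S := by
      rw [← iSup_pow_eq_top K d, Submodule.iSup_mul, Submodule.mul_iSup]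
      refine iSup_le fun k => ?_
      rw [Submodule.iSup_mul]
      refine iSup_le fun j => ?_
      refine le_trans (mul_le_mul' (mul_le_mul' le_rfl ?_) le_rfl)
        (le_trans (term_le_JJ K d _ S (rfl : j + i + k = _) hiS) (le_iSup _ _))
      exact Submodule.span_le.mpr (Set.singleton_subset_iff.mpr (Submodule.subset_span hsF))
    exact key (Submodule.mul_mem_mul (Submodule.mul_mem_mul Submodule.mem_top
      (Submodule.mem_span_singleton_self s)) Submodule.mem_top)
  · refine iSup_le fun n => iSup_le fun p => iSup_le fun hp => ?_
    rcases p with ⟨j, i, k⟩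
    obtain ⟨-, hiS⟩ := hp
    rw [pow_eq_span_words, pow_eq_span_words, Submodule.span_mul_span, Submodule.span_mul_span]
    refine Submodule.span_le.mpr ?_
    rintro x ⟨y, ⟨u, ⟨w1, -, rfl⟩, v, hv, rfl⟩, z, ⟨w2, -, rfl⟩, rfl⟩
    exact subset_span ⟨Bw K d w1, v, Bw K d w2, ⟨i, hiS, hv⟩, rfl⟩

theorem TJ_univ_eq_iSup :
    TJ K d G Set.univ = ⨆ m, TJ K d G (Set.Iic m) := by
  apply le_antisymm
  · refine iSup_le fun n => iSup_le fun p => iSup_le fun hp => ?_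
    refine le_trans (term_le_JJ K d G (Set.Iic p.2.1) hp.1 Set.self_mem_Iic) ?_
    refine le_trans (le_iSup (JJ K d G (Set.Iic p.2.1)) n) ?_
    exact le_iSup (fun m => TJ K d G (Set.Iic m)) p.2.1
  · refine iSup_le fun m => iSup_le fun n => iSup_le fun p => iSup_le fun hp => ?_
    exact le_trans (term_le_JJ K d G Set.univ hp.1 trivial) (le_iSup _ n)

theorem TJ_Iic_mono : Monotone (fun m => TJ K d G (Set.Iic m)) := by
  intro m1 m2 h
  refine iSup_le fun n => iSup_le fun p => iSup_le fun hp => ?_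
  exact le_trans (term_le_JJ K d G (Set.Iic m2) hp.1 (le_trans hp.2 h)) (le_iSup _ n)

theorem JJ_decomp (m : ℕ) (hG0 : G 0 = ⊥) (hG1 : G 1 = ⊥) (n : ℕ) :
    JJ K d G (Set.Iic m) (n + 1) ≤
      Vd K d * JJ K d G (Set.Iic m) n ⊔
      ⨆ (i : ℕ) (_ : 2 ≤ i ∧ i ≤ m ∧ i ≤ n + 1), G i * (Vd K d) ^ (n + 1 - i) := by
  refine iSup_le fun p => iSup_le fun hp => ?_
  rcases p with ⟨j, i, k⟩
  obtain ⟨hsum, him⟩ := hp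
  replace hsum : j + i + k = n + 1 := hsum
  replace him : i ≤ m := him
  rcases j with _ | j'
  · by_cases hi2 : 2 ≤ i
    · refine le_trans ?_ (le_sup_right)
      refine le_trans ?_ (le_iSup_of_le i (le_iSup_of_le ⟨hi2, him, by omega⟩ le_rfl))
      rw [pow_zero, one_mul]
      have : k = n + 1 - i := by omega
      rw [this]
    · interval_cases i
      · rw [hG0, Submodule.mul_bot, Submodule.bot_mul]; exact bot_le
      · rw [hG1, Submodule.mul_bot, Submodule.bot_mul]; exact bot_le
  · refine le_trans ?_ le_sup_left
    have : (Vd K d) ^ (j' + 1) * G i * (Vd K d) ^ k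
        = Vd K d * ((Vd K d) ^ j' * G i * (Vd K d) ^ k) := by
      rw [pow_succ', mul_assoc, mul_assoc, mul_assoc]
    rw [this]
    exact mul_le_mul' le_rfl (term_le_JJ K d G _ (by omega) him)

theorem absorb (hG : ∀ i, G i ≤ (Vd K d) ^ i) {i : ℕ} (hi : 1 ≤ i) (j : ℕ) :
    G i * JJ K d G S j ≤ Vd K d * JJ K d G S (i - 1 + j) := by
  have h1 : G i ≤ Vd K d * (Vd K d) ^ (i - 1) := by
    have : i - 1 + 1 = i := by omega
    rw [← pow_succ', this]
    exact hG i
  calc G i * JJ K d G S j ≤ (Vd K d * (Vd K d) ^ (i - 1)) * JJ K d G S j :=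
        mul_le_mul' h1 le_rfl
    _ = Vd K d * ((Vd K d) ^ (i - 1) * JJ K d G S j) := by rw [mul_assoc]
    _ ≤ Vd K d * JJ K d G S (i - 1 + j) := mul_le_mul' le_rfl (mul_JJ K d G S _ _)

theorem exists_compl_finrank {M : Type*} [AddCommGroup M] [Module K M]
    (X W : Submodule K M) (h : X ≤ W) [FiniteDimensional K W] :
    ∃ C : Submodule K M, C ≤ W ∧ X ⊔ C = W ∧
      finrank K X + finrank K C = finrank K W := by
  obtain ⟨q, hq⟩ := Submodule.exists_isCompl (Submodule.comap W.subtype X)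
  refine ⟨Submodule.map W.subtype q, Submodule.map_subtype_le W q, ?_, ?_⟩
  · have : Submodule.map W.subtype (Submodule.comap W.subtype X) = X := by
      rw [Submodule.map_comap_subtype, inf_eq_right.mpr h]
    rw [← this, ← Submodule.map_sup, hq.sup_eq_top, Submodule.map_top,
      Submodule.range_subtype]
  · have e1 : finrank K (Submodule.comap W.subtype X) = finrank K X := by
      exact (Submodule.comapSubtypeEquivOfLe h).finrank_eq
    have e2 : finrank K (Submodule.map W.subtype q) = finrank K q :=
      ((Submodule.equivMapOfInjective _ W.injective_subtype _).finrank_eq).symm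
    rw [← e1, e2, ← Submodule.finrank_sup_add_finrank_inf_eq,
      hq.sup_eq_top, hq.inf_eq_bot]
    simp [finrank_top]

theorem span_singleton_mul_map (a : FreeAlgebra K (Fin d))
    (X : Submodule K (FreeAlgebra K (Fin d))) :
    span K {a} * X = Submodule.map (LinearMap.mulLeft K a) X := by
  ext y
  simp [Submodule.mem_span_singleton_mul, LinearMap.mulLeft_apply, eq_comm]

theorem fd_span_mul (s : Finset (FreeAlgebra K (Fin d)))
    (X : Submodule K (FreeAlgebra K (Fin d))) [FiniteDimensional K X] :
    FiniteDimensional K (span K (s : Set (FreeAlgebra K (Fin d))) * X) := by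
  classical
  induction s using Finset.induction with
  | empty =>
    rw [Finset.coe_empty, Submodule.span_empty, Submodule.bot_mul]
    exact Submodule.finiteDimensional_of_le (bot_le : (⊥ : Submodule K (FreeAlgebra K (Fin d))) ≤ X)
  | insert a s hx ih =>
    rw [Finset.coe_insert, Submodule.span_insert, Submodule.sup_mul]
    have h1 : FiniteDimensional K (span K {a} * X) := by
      rw [span_singleton_mul_map K d]
      exact Module.Finite.map _ _
    exact Submodule.finiteDimensional_sup _ _

theorem finrank_span_mul_le (s : Finset (FreeAlgebra K (Fin d)))
    (X : Submodule K (FreeAlgebra K (Fin d))) [FiniteDimensional K X] :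
    finrank K (span K (s : Set (FreeAlgebra K (Fin d))) * X) ≤ s.card * finrank K X := by
  classical
  induction s using Finset.induction with
  | empty =>
    rw [Finset.coe_empty, Submodule.span_empty, Submodule.bot_mul]
    simp
  | insert a s hx ih =>
    rw [Finset.coe_insert, Submodule.span_insert, Submodule.sup_mul,
      Finset.card_insert_of_notMem hx]
    have h1 : FiniteDimensional K (span K {a} * X) := by
      rw [span_singleton_mul_map K d]
      exact Module.Finite.map _ _
    have h2 : FiniteDimensional K (span K (s : Set (FreeAlgebra K (Fin d))) * X) :=
      fd_span_mul K d s X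
    refine le_trans (Submodule.finrank_add_le_finrank_add_finrank _ _) ?_
    have h3 : finrank K (span K {a} * X) ≤ finrank K X := by
      rw [span_singleton_mul_map K d]
      exact Submodule.finrank_map_le _ _
    have := ih
    calc finrank K (span K {a} * X) + finrank K (span K (s : Set (FreeAlgebra K (Fin d))) * X)
        ≤ finrank K X + s.card * finrank K X := Nat.add_le_add h3 ih
      _ = (s.card + 1) * finrank K X := by ring

theorem finrank_finset_sup_le {M : Type*} [AddCommGroup M] [Module K M] (s : Finset ℕ)
    (f : ℕ → Submodule K M) (hfd : ∀ i, FiniteDimensional K (f i)) :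
    finrank K ↥(s.sup f) ≤ ∑ i ∈ s, finrank K ↥(f i) := by
  classical
  induction s using Finset.induction with
  | empty => simp [finrank_bot]
  | insert a s hx ih =>
    rw [Finset.sup_insert, Finset.sum_insert hx]
    have : FiniteDimensional K ↥(s.sup f) := Submodule.finiteDimensional_finset_sup s f
    exact le_trans (Submodule.finrank_add_le_finrank_add_finrank _ _)
      (Nat.add_le_add le_rfl ih)

theorem exists_finset_Vd : ∃ s : Finset (FreeAlgebra K (Fin d)),
    ((s : Set (FreeAlgebra K (Fin d))) = Set.range (ι K)) ∧ s.card ≤ d := by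
  classical
  refine ⟨Finset.univ.image (ι K), by simp, le_trans Finset.card_image_le (by simp)⟩

theorem JJ_zero (hG0 : G 0 = ⊥) : JJ K d G S 0 = ⊥ := by
  refine le_bot_iff.mp (iSup_le fun p => iSup_le fun hp => ?_)
  rcases p with ⟨j, i, k⟩
  obtain ⟨hsum, -⟩ := hp
  replace hsum : j + i + k = 0 := hsum
  have hi : i = 0 := by omega
  rw [hi, hG0, Submodule.mul_bot, Submodule.bot_mul]

set_option maxHeartbeats 1000000 in
/-- main dimension inequality -/
theorem main_ineq (F : ℕ → Finset (FreeAlgebra K (Fin d)))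
    (hG : ∀ i, (span K ((F i : Set (FreeAlgebra K (Fin d))))) ≤ (Vd K d) ^ i)
    (hF0 : F 0 = ∅) (hF1 : F 1 = ∅) (m : ℕ)
    (C : ℕ → Submodule K (FreeAlgebra K (Fin d)))
    (hC1 : ∀ j, C j ≤ (Vd K d) ^ j)
    (hC2 : ∀ j, JJ K d (fun i => span K ((F i : Set (FreeAlgebra K (Fin d)))) ) (Set.Iic m) j ⊔ C j = (Vd K d) ^ j)
    (n : ℕ) :
    finrank K ↥(JJ K d (fun i => span K ((F i : Set (FreeAlgebra K (Fin d))))) (Set.Iic m) (n+1))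
      ≤ d * finrank K ↥(JJ K d (fun i => span K ((F i : Set (FreeAlgebra K (Fin d))))) (Set.Iic m) n)
        + ∑ i ∈ Finset.Icc 2 m, (if i ≤ n + 1 then (F i).card * finrank K ↥(C (n+1-i)) else 0) := by
  classical
  set G : ℕ → Submodule K (FreeAlgebra K (Fin d)) :=
    fun i => span K ((F i : Set (FreeAlgebra K (Fin d)))) with hGdef
  have hG0 : G 0 = ⊥ := by simp [hGdef, hF0]
  have hG1 : G 1 = ⊥ := by simp [hGdef, hF1]
  have hfdC : ∀ j, FiniteDimensional K ↥(C j) :=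
    fun j => Submodule.finiteDimensional_of_le (hC1 j)
  have hfdJ : ∀ j, FiniteDimensional K ↥(JJ K d G (Set.Iic m) j) :=
    fun j => JJ_fd K d G (Set.Iic m) hG j
  set T : Submodule K (FreeAlgebra K (Fin d)) :=
    (Finset.Icc 2 m).sup (fun i => if i ≤ n + 1 then G i * C (n+1-i) else ⊥) with hTdef
  have hfd_term : ∀ i : ℕ, FiniteDimensional K
      ↥(if i ≤ n + 1 then G i * C (n+1-i) else (⊥ : Submodule K (FreeAlgebra K (Fin d)))) := by
    intro i
    by_cases h : i ≤ n + 1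
    · rw [if_pos h]
      exact fd_span_mul K d (F i) (C (n+1-i))
    · rw [if_neg h]
      exact Submodule.finiteDimensional_of_le
        (bot_le : (⊥ : Submodule K (FreeAlgebra K (Fin d))) ≤ (Vd K d) ^ 0)
  -- step 1 : refined decomposition
  have step1 : JJ K d G (Set.Iic m) (n+1) ≤ Vd K d * JJ K d G (Set.Iic m) n ⊔ T := by
    refine le_trans (JJ_decomp K d G m hG0 hG1 n) ?_
    refine sup_le le_sup_left ?_
    refine iSup_le fun i => iSup_le fun hi => ?_
    obtain ⟨hi2, him, hin⟩ := hi
    rw [← hC2 (n+1-i), Submodule.mul_sup]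
    refine sup_le ?_ ?_
    · refine le_trans (absorb K d G (Set.Iic m) hG (by omega) _) ?_
      have : i - 1 + (n + 1 - i) = n := by omega
      rw [this]
      exact le_sup_left
    · refine le_trans ?_ le_sup_right
      refine le_trans ?_ (Finset.le_sup (Finset.mem_Icc.mpr ⟨hi2, him⟩))
      rw [if_pos hin]
  -- step 2 : dimension count
  obtain ⟨sV, hsV, hsVcard⟩ := exists_finset_Vd K d
  have hVspan : Vd K d = span K (sV : Set (FreeAlgebra K (Fin d))) := by rw [hsV]; rfl
  have hfdVJ : FiniteDimensional K ↥(Vd K d * JJ K d G (Set.Iic m) n) := by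
    rw [hVspan]
    exact fd_span_mul K d _ _
  have hfdT : FiniteDimensional K T :=
    Submodule.finiteDimensional_finset_sup _ _
  have h1 : finrank K ↥(JJ K d G (Set.Iic m) (n+1))
      ≤ finrank K ↥(Vd K d * JJ K d G (Set.Iic m) n ⊔ T) := by
    have : FiniteDimensional K ↥(Vd K d * JJ K d G (Set.Iic m) n ⊔ T) :=
      Submodule.finiteDimensional_sup _ _
    exact Submodule.finrank_mono step1
  have h2 : finrank K ↥(Vd K d * JJ K d G (Set.Iic m) n ⊔ T)
      ≤ finrank K ↥(Vd K d * JJ K d G (Set.Iic m) n) + finrank K T :=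
    Submodule.finrank_add_le_finrank_add_finrank _ _
  have h3 : finrank K ↥(Vd K d * JJ K d G (Set.Iic m) n)
      ≤ d * finrank K ↥(JJ K d G (Set.Iic m) n) := by
    rw [hVspan]
    exact le_trans (finrank_span_mul_le K d _ _) (Nat.mul_le_mul_right _ hsVcard)
  have h4 : finrank K T ≤ ∑ i ∈ Finset.Icc 2 m,
      (if i ≤ n + 1 then (F i).card * finrank K ↥(C (n+1-i)) else 0) := by
    refine le_trans (finrank_finset_sup_le K _ _ hfd_term) ?_
    refine Finset.sum_le_sum fun i _ => ?_
    by_cases h : i ≤ n + 1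
    · rw [if_pos h, if_pos h]
      exact finrank_span_mul_le K d (F i) (C (n+1-i))
    · rw [if_neg h, if_neg h]
      simp [finrank_bot]
  omega

theorem sum_shift (g : ℕ → ℝ) (i : ℕ) (hi : 1 ≤ i) (M : ℕ) :
    ∑ n ∈ Finset.range M, (if i ≤ n + 1 then g (n + 1 - i) else 0)
      = ∑ j ∈ Finset.range (M + 1 - i), g j := by
  induction M with
  | zero =>
    have : 1 - i = 0 := by omega
    simp [this]
  | succ M ih =>
    rw [Finset.sum_range_succ, ih]
    by_cases h : i ≤ M + 1
    · rw [if_pos h]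
      have : M + 1 + 1 - i = (M + 1 - i) + 1 := by omega
      rw [this, Finset.sum_range_succ]
    · rw [if_neg h]
      have h1 : M + 1 + 1 - i = 0 := by omega
      have h2 : M + 1 - i = 0 := by omega
      rw [h1, h2, add_zero]

theorem sum_trunc (g : ℕ → ℝ) (N : ℕ) (hg : ∀ k, N ≤ k → g k = 0) (L : ℕ) (h : N ≤ L) :
    ∑ j ∈ Finset.range L, g j = ∑ j ∈ Finset.range N, g j :=
  (Finset.sum_subset (Finset.range_subset_range.mpr h)
    (fun x _ hx => hg x (by simpa using hx))).symm

end GSaux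

open FreeAlgebra Submodule Module GSaux in
/-- Golod–Shafarevich criterion: let `A` be the free associative `K`-algebra on `d`
generators of degree one, and `I` the two-sided ideal generated by homogeneous
elements (the finitely many elements of `F i` having degree `i`, with `r i` of them,
`r 1 = 0`).  If for infinitely many `m` there is `t_m > 0` with
`1 - d t_m + ∑_{i=2}^m r_i t_m^i < 0`, then `A/I` is infinite dimensional over `K`. -/
theorem stmt1 {K : Type*} [Field K] (d : ℕ)
    (V : Submodule K (FreeAlgebra K (Fin d)))
    (hV : V = Submodule.span K (Set.range (FreeAlgebra.ι K)))
    (F : ℕ → Finset (FreeAlgebra K (Fin d)))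
    (hhom : ∀ i, (F i : Set (FreeAlgebra K (Fin d))) ⊆ (V ^ i : Submodule K (FreeAlgebra K (Fin d))))
    (r : ℕ → ℕ) (hr : ∀ i, r i = (F i).card) (hr0 : r 0 = 0) (hr1 : r 1 = 0)
    (I : Submodule K (FreeAlgebra K (Fin d)))
    (hI : I = Submodule.span K
      {x : FreeAlgebra K (Fin d) | ∃ a s b : FreeAlgebra K (Fin d), (∃ i, s ∈ F i) ∧ x = a * s * b})
    (hGS : ∀ N : ℕ, ∃ m ≥ N, ∃ t : ℝ, 0 < t ∧
      1 - (d : ℝ) * t + ∑ i ∈ Finset.Icc 2 m, (r i : ℝ) * t ^ i < 0) :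
    ¬ FiniteDimensional K (FreeAlgebra K (Fin d) ⧸ I) := by
  intro hfd
  classical
  subst hV
  set G : ℕ → Submodule K (FreeAlgebra K (Fin d)) :=
    fun i => span K ((F i : Set (FreeAlgebra K (Fin d)))) with hGdef
  have hVd : Submodule.span K (Set.range (FreeAlgebra.ι K)) = Vd K d := rfl
  rw [hVd] at hhom
  have hG : ∀ i, G i ≤ (Vd K d) ^ i := fun i => Submodule.span_le.mpr (hhom i)
  have hF0 : F 0 = ∅ := Finset.card_eq_zero.mp (by rw [← hr 0]; exact hr0)
  have hF1 : F 1 = ∅ := Finset.card_eq_zero.mp (by rw [← hr 1]; exact hr1)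
  have hG0 : G 0 = ⊥ := by simp [hGdef, hF0]
  have hG1 : G 1 = ⊥ := by simp [hGdef, hF1]
  have hI' : I = TJ K d G Set.univ := by
    rw [hI, ← span_eq_TJ K d Set.univ F]
    congr 1
    ext x
    simp
  -- Step A : some power of V is contained in I
  obtain ⟨M₀, hM₀pos, hM₀⟩ : ∃ M₀, 1 ≤ M₀ ∧ (Vd K d) ^ M₀ ≤ I := by
    obtain ⟨s, hs⟩ : (⊤ : Submodule K (FreeAlgebra K (Fin d) ⧸ I)).FG :=
      Module.finite_def.mp hfd
    set s' : Finset (FreeAlgebra K (Fin d)) :=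
      s.image (Function.surjInv (Submodule.mkQ_surjective I)) with hs'def
    have hmap : Submodule.map I.mkQ (span K (s' : Set (FreeAlgebra K (Fin d)))) = ⊤ := by
      rw [Submodule.map_span, ← hs]
      congr 1
      ext y
      simp only [hs'def, Finset.coe_image, Set.image_image,
        Function.surjInv_eq (Submodule.mkQ_surjective I)]
      simp
    have hsup : span K (s' : Set (FreeAlgebra K (Fin d))) ⊔ I = ⊤ := by
      have := congrArg (Submodule.comap I.mkQ) hmap
      rwa [Submodule.comap_map_eq, Submodule.ker_mkQ, Submodule.comap_top] at this
    -- the span of s' is contained in some U n₀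
    have hcompact := (Submodule.fg_iff_compact _).mp
      (⟨s', rfl⟩ : (span K (s' : Set (FreeAlgebra K (Fin d)))).FG)
    set U : ℕ → Submodule K (FreeAlgebra K (Fin d)) :=
      fun n => (Finset.range (n+1)).sup (fun j => (Vd K d) ^ j) with hUdef
    have hUtop : span K (s' : Set (FreeAlgebra K (Fin d))) ≤ ⨆ n, U n := by
      refine le_trans le_top ?_
      rw [← iSup_pow_eq_top K d]
      refine iSup_le fun n => le_trans ?_ (le_iSup U n)
      exact Finset.le_sup (by simp)
    obtain ⟨tf, htf⟩ := CompleteLattice.IsCompactElement.exists_finset_of_le_iSup _ hcompact U hUtop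
    have hUmono : Monotone U := by
      intro a b hab
      exact Finset.sup_mono (Finset.range_subset_range.mpr (by omega))
    have hn₀ : span K (s' : Set (FreeAlgebra K (Fin d))) ≤ U (tf.sup id) := by
      refine le_trans htf ?_
      exact iSup₂_le fun j hj => hUmono (Finset.le_sup (f := id) hj)
    set n₀ := tf.sup id
    refine ⟨n₀ + 1, by omega, ?_⟩
    intro x hx
    have hxtop : x ∈ span K (s' : Set (FreeAlgebra K (Fin d))) ⊔ I := by rw [hsup]; trivial
    obtain ⟨y, hy, z, hz, rfl⟩ := Submodule.mem_sup.mp hxtop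
    have hπx : pn K d (n₀+1) (y + z) = y + z := pn_of_mem K d hx
    have hπy : pn K d (n₀+1) y = 0 := by
      have hyU : y ∈ U n₀ := hn₀ hy
      have : U n₀ ≤ LinearMap.ker (pn K d (n₀+1)) := by
        refine Finset.sup_le fun j hj => ?_
        intro w hw
        simp only [LinearMap.mem_ker]
        exact pn_of_mem_ne K d (by simp at hj; omega) hw
      simpa using this hyU
    have hπz : pn K d (n₀+1) z ∈ I := by
      rw [hI']
      refine le_iSup (JJ K d G Set.univ) (n₀+1) ?_
      exact pn_mem_TJ K d G Set.univ hG (n₀+1) (by rw [← hI']; exact hz)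
    rw [← hπx, map_add, hπy, zero_add]
    exact hπz
  -- Step B : it is contained in the ideal generated in degrees ≤ m₀
  obtain ⟨m₀, hm₀⟩ : ∃ m₀, (Vd K d) ^ M₀ ≤ TJ K d G (Set.Iic m₀) := by
    have hWfg : ((Vd K d) ^ M₀ : Submodule K (FreeAlgebra K (Fin d))).FG := by
      rw [pow_eq_span_range]
      exact Submodule.fg_span (Set.finite_range _)
    have hcompact := (Submodule.fg_iff_compact _).mp hWfg
    have hle : (Vd K d) ^ M₀ ≤ ⨆ m, TJ K d G (Set.Iic m) := by
      rw [← TJ_univ_eq_iSup, ← hI']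
      exact hM₀
    obtain ⟨tf, htf⟩ := CompleteLattice.IsCompactElement.exists_finset_of_le_iSup _ hcompact _ hle
    refine ⟨tf.sup id, le_trans htf (iSup₂_le fun j hj => ?_)⟩
    exact TJ_Iic_mono K d G (Finset.le_sup (f := id) hj)
  -- pick m and t from the hypothesis
  obtain ⟨m, hmm₀, t, ht, hEt⟩ := hGS m₀
  have hWm : (Vd K d) ^ M₀ ≤ TJ K d G (Set.Iic m) :=
    le_trans hm₀ (TJ_Iic_mono K d G hmm₀)
  -- vanishing of graded pieces of the quotient in degrees ≥ M₀
  have hvanJ : ∀ k, M₀ ≤ k → JJ K d G (Set.Iic m) k = (Vd K d) ^ k := by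
    have hbase : (Vd K d) ^ M₀ ≤ JJ K d G (Set.Iic m) M₀ := by
      intro x hx
      have := pn_mem_TJ K d G (Set.Iic m) hG M₀ (hWm hx)
      rwa [pn_of_mem K d hx] at this
    intro k hk
    refine le_antisymm (JJ_le_pow K d G (Set.Iic m) hG k) ?_
    have hpow : (Vd K d) ^ k = (Vd K d) ^ (k - M₀) * (Vd K d) ^ M₀ := by
      rw [← pow_add]
      congr 1
      omega
    rw [hpow]
    refine le_trans (mul_le_mul' le_rfl hbase) ?_
    refine le_trans (mul_JJ K d G (Set.Iic m) _ _) ?_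
    have : k - M₀ + M₀ = k := by omega
    rw [this]
  -- choose complements
  have hcompl : ∀ j, ∃ C : Submodule K (FreeAlgebra K (Fin d)), C ≤ (Vd K d) ^ j ∧
      JJ K d G (Set.Iic m) j ⊔ C = (Vd K d) ^ j ∧
      finrank K ↥(JJ K d G (Set.Iic m) j) + finrank K ↥C = finrank K ↥((Vd K d) ^ j) :=
    fun j => exists_compl_finrank K _ _ (JJ_le_pow K d G (Set.Iic m) hG j)
  choose C hC1 hC2 hC3 using hcompl
  -- real sequences
  set α : ℕ → ℝ := fun j => (finrank K ↥(JJ K d G (Set.Iic m) j) : ℝ) with hα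
  set β : ℕ → ℝ := fun j => (finrank K ↥(C j) : ℝ) with hβ
  have hαβ : ∀ j, α j + β j = (d : ℝ) ^ j := by
    intro j
    have := hC3 j
    rw [finrank_pow K d j] at this
    have := congrArg (fun x : ℕ => (x : ℝ)) this
    push_cast at this
    simpa [hα, hβ] using this
  have hβ0 : ∀ j, 0 ≤ β j := fun j => by positivity
  have hβzero : β 0 = 1 := by
    have h0 : α 0 = 0 := by
      simp only [hα]
      rw [JJ_zero K d G (Set.Iic m) hG0]
      simp [finrank_bot]
    have := hαβ 0
    rw [h0] at this
    simpa using this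
  have hβvan : ∀ k, M₀ ≤ k → β k = 0 := by
    intro k hk
    have hα' : α k = (d : ℝ) ^ k := by
      simp only [hα]
      rw [hvanJ k hk, finrank_pow K d k]
      push_cast
      ring
    have := hαβ k
    rw [hα'] at this
    linarith
  -- key inequality over ℝ
  have hkey : ∀ n : ℕ, α (n+1) ≤ d * α n +
      ∑ i ∈ Finset.Icc 2 m, (if i ≤ n + 1 then (r i : ℝ) * β (n+1-i) else 0) := by
    intro n
    have h := main_ineq K d F hG hF0 hF1 m C hC1 hC2 n
    have hcast := (Nat.cast_le (α := ℝ)).mpr h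
    push_cast at hcast
    refine le_trans hcast ?_
    simp only [hα, hβ, hr]
    exact le_refl _
  have hkey2 : ∀ n : ℕ, 0 ≤ β (n+1) - d * β n +
      ∑ i ∈ Finset.Icc 2 m, (if i ≤ n + 1 then (r i : ℝ) * β (n+1-i) else 0) := by
    intro n
    have h1 := hkey n
    have h2 := hαβ n
    have h3 := hαβ (n+1)
    have : (d:ℝ)^(n+1) = d * (d:ℝ)^n := by ring
    nlinarith [hkey n]
  -- numeric finale
  set g : ℕ → ℝ := fun j => β j * t ^ j with hg
  set P : ℝ := ∑ j ∈ Finset.range M₀, g j with hP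
  have hgnn : ∀ j, 0 ≤ g j := fun j => mul_nonneg (hβ0 j) (pow_pos ht j).le
  have hg0 : g 0 = 1 := by simp [hg, hβzero]
  have hgvan : ∀ k, M₀ ≤ k → g k = 0 := fun k hk => by simp [hg, hβvan k hk]
  have hP1 : 1 ≤ P := by
    have h := Finset.sum_le_sum_of_subset_of_nonneg
      (Finset.range_subset_range.mpr hM₀pos) (fun j _ _ => hgnn j)
    simpa [hg0] using h
  set M := M₀ + m with hM
  have hS : 0 ≤ ∑ n ∈ Finset.range M, t^(n+1) * (β (n+1) - d * β n +
      ∑ i ∈ Finset.Icc 2 m, (if i ≤ n + 1 then (r i : ℝ) * β (n+1-i) else 0)) :=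
    Finset.sum_nonneg fun n _ => mul_nonneg (pow_pos ht _).le (hkey2 n)
  have hsplit : ∀ n : ℕ, t^(n+1) * (β (n+1) - d * β n +
      ∑ i ∈ Finset.Icc 2 m, (if i ≤ n + 1 then (r i : ℝ) * β (n+1-i) else 0))
      = (g (n+1) - ((d : ℝ) * t) * g n) +
        ∑ i ∈ Finset.Icc 2 m, (if i ≤ n + 1 then ((r i : ℝ) * t^i) * g (n+1-i) else 0) := by
    intro n
    have hterm : ∀ i : ℕ, t^(n+1) * (if i ≤ n + 1 then (r i : ℝ) * β (n+1-i) else 0)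
        = (if i ≤ n + 1 then ((r i : ℝ) * t^i) * g (n+1-i) else 0) := by
      intro i
      by_cases h : i ≤ n + 1
      · rw [if_pos h, if_pos h]
        have hpow : t^(n+1) = t^i * t^(n+1-i) := by
          rw [← pow_add]
          congr 1
          omega
        rw [hpow]
        simp only [hg]
        ring
      · rw [if_neg h, if_neg h, mul_zero]
    rw [mul_add, mul_sub, Finset.mul_sum]
    rw [Finset.sum_congr rfl (fun i _ => hterm i)]
    congr 1
    simp only [hg]
    ring_nf
  have hS' : 0 ≤ ((∑ n ∈ Finset.range M, g (n+1)) - ((d : ℝ) * t) * (∑ n ∈ Finset.range M, g n))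
      + ∑ n ∈ Finset.range M, ∑ i ∈ Finset.Icc 2 m,
          (if i ≤ n + 1 then ((r i : ℝ) * t^i) * g (n+1-i) else 0) := by
    have h := hS
    rw [Finset.sum_congr rfl (fun n _ => hsplit n)] at h
    rwa [Finset.sum_add_distrib, Finset.sum_sub_distrib, ← Finset.mul_sum] at h
  have hA : ∑ n ∈ Finset.range M, g (n+1) = P - 1 := by
    have h1 := Finset.sum_range_succ' g M
    have h2 : ∑ j ∈ Finset.range (M+1), g j = P := by
      rw [hP]
      exact sum_trunc g M₀ hgvan (M+1) (by omega)
    rw [hg0] at h1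
    rw [h2] at h1
    linarith
  have hB : ∑ n ∈ Finset.range M, g n = P := by
    rw [hP]
    exact sum_trunc g M₀ hgvan M (by omega)
  have hCsum : ∑ n ∈ Finset.range M, ∑ i ∈ Finset.Icc 2 m,
      (if i ≤ n + 1 then ((r i : ℝ) * t^i) * g (n+1-i) else 0)
      = (∑ i ∈ Finset.Icc 2 m, (r i : ℝ) * t^i) * P := by
    rw [Finset.sum_comm, Finset.sum_mul]
    refine Finset.sum_congr rfl fun i hi => ?_
    obtain ⟨hi2, him⟩ := Finset.mem_Icc.mp hi
    have hpull : ∀ n : ℕ, (if i ≤ n + 1 then ((r i : ℝ) * t^i) * g (n+1-i) else 0)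
        = ((r i : ℝ) * t^i) * (if i ≤ n + 1 then g (n+1-i) else 0) := by
      intro n
      by_cases h : i ≤ n + 1 <;> simp [h]
    rw [Finset.sum_congr rfl (fun n _ => hpull n), ← Finset.mul_sum,
      sum_shift g i (by omega) M, hP]
    rw [sum_trunc g M₀ hgvan (M+1-i) (by omega)]
  rw [hA, hB, hCsum] at hS'
  nlinarith [hS', hEt, hP1]
end

section
/- Let A be the free associative K-algebra on x, y (degree 1). Suppose for every m ≥ 1 subspaces U(2^m), V(2^m) of A(2^m) satisfy: V(2^m) is spanned by monomials; V(2^m) ⊕ U(2^m) = A(2^m); A(2^{m-1})U(2^{m-1}) + U(2^{m-1})A(2^{m-1}) ⊆ U(2^m); and V(2^m) ⊆ V(2^{m-1})V(2^{m-1}), where V(2^0) = Kx + Ky, U(2^0) = 0. Define E(k) = { r ∈ A(k) : A r A ∩ A(2^{n+1}) ⊆ U(2^n)A(2^n) + A(2^n)U(2^n) } where 2^{n-1} ≤ k < 2^n, and E = ⊕_k E(k). Then E is a two-sided ideal of A. -/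
/-- The degree-`k` homogeneous component `A(k)` of the free `K`-algebra `A` on two
degree-one generators `x, y`. -/
noncomputable def Adeg (K : Type*) [Field K] (k : ℕ) : Submodule K (FreeAlgebra K (Fin 2)) :=
  (Submodule.span K (Set.range (FreeAlgebra.ι K))) ^ k

/-- `x` is a monomial of `A`, i.e. a product of generators. -/
def IsMonomial (K : Type*) [Field K] (x : FreeAlgebra K (Fin 2)) : Prop :=
  ∃ l : List (Fin 2), x = (l.map (FreeAlgebra.ι K)).prod

/-- The homogeneous component `E(k)`: for `k ≥ 1` and `n` with `2^{n-1} ≤ k < 2^n`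
(so `n = log₂ k + 1`), `E(k) = { r ∈ A(k) : A r A ∩ A(2^{n+1}) ⊆ U(2^n)A(2^n) + A(2^n)U(2^n) }`,
expressed via `A(i) r A(j) ⊆ U(2^n)A(2^n) + A(2^n)U(2^n)` for all `i + k + j = 2^{n+1}`.
Here `U m` plays the role of `U(2^m)`. -/
noncomputable def Edeg (K : Type*) [Field K] (U : ℕ → Submodule K (FreeAlgebra K (Fin 2)))
    (k : ℕ) : Submodule K (FreeAlgebra K (Fin 2)) :=
  Adeg K k ⊓ ⨅ (i : ℕ) (j : ℕ) (_ : i + k + j = 2 ^ (Nat.log 2 k + 2))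
    (a : FreeAlgebra K (Fin 2)) (_ : a ∈ Adeg K i)
    (b : FreeAlgebra K (Fin 2)) (_ : b ∈ Adeg K j),
    Submodule.comap ((LinearMap.mulRight K b).comp (LinearMap.mulLeft K a))
      (U (Nat.log 2 k + 1) * Adeg K (2 ^ (Nat.log 2 k + 1)) +
        Adeg K (2 ^ (Nat.log 2 k + 1)) * U (Nat.log 2 k + 1))

/-- `E = ⊕_{k ≥ 1} E(k)`. -/
noncomputable def Eideal (K : Type*) [Field K]
    (U : ℕ → Submodule K (FreeAlgebra K (Fin 2))) : Submodule K (FreeAlgebra K (Fin 2)) :=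
  ⨆ (k : ℕ) (_ : 1 ≤ k), Edeg K U k

lemma Adeg_add (K : Type*) [Field K] (a b : ℕ) :
    Adeg K (a + b) = Adeg K a * Adeg K b := pow_add _ a b

/-- Key propagation lemma: membership in `E(k)` controls products at every level
`N ≥ log₂ k + 1`. -/
lemma key_lemma {K : Type*} [Field K] (U : ℕ → Submodule K (FreeAlgebra K (Fin 2)))
    (habs : ∀ m, Adeg K (2 ^ m) * U m + U m * Adeg K (2 ^ m) ≤ U (m + 1))
    {k : ℕ} {x : FreeAlgebra K (Fin 2)} (hx : x ∈ Edeg K U k)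
    (N : ℕ) (hN : Nat.log 2 k + 1 ≤ N) :
    ∀ p q : ℕ, p + k + q = 2 ^ (N + 1) →
      Adeg K p * Submodule.span K {x} * Adeg K q ≤
        U N * Adeg K (2 ^ N) + Adeg K (2 ^ N) * U N := by
  have habsl : ∀ M, Adeg K (2 ^ M) * U M ≤ U (M + 1) := fun M =>
    le_trans (by rw [Submodule.add_eq_sup]; exact le_sup_left) (habs M)
  have habsr : ∀ M, U M * Adeg K (2 ^ M) ≤ U (M + 1) := fun M =>
    le_trans (by rw [Submodule.add_eq_sup]; exact le_sup_right) (habs M)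
  have hWU : ∀ M, U M * Adeg K (2 ^ M) + Adeg K (2 ^ M) * U M ≤ U (M + 1) := fun M => by
    rw [Submodule.add_eq_sup]; exact sup_le (habsr M) (habsl M)
  induction N, hN using Nat.le_induction with
  | base =>
    -- base case: exactly the defining condition of `Edeg`
    have hx2 := (Submodule.mem_inf.mp hx).2
    simp only [Submodule.mem_iInf, Submodule.mem_comap, LinearMap.coe_comp,
      Function.comp_apply, LinearMap.mulLeft_apply, LinearMap.mulRight_apply] at hx2
    intro p q hpq
    refine Submodule.mul_le.mpr fun z hz b hb => ?_
    refine Submodule.mul_induction_on hz (fun m hm y hy => ?_) (fun z1 z2 h1 h2 => ?_)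
    · obtain ⟨c, rfl⟩ := Submodule.mem_span_singleton.mp hy
      rw [mul_smul_comm, smul_mul_assoc]
      exact Submodule.smul_mem _ c (hx2 p q hpq m hm b hb)
    · rw [add_mul]; exact add_mem h1 h2
  | succ N hN ih =>
    intro p q hpq
    have e1 : (2:ℕ) ^ (N + 1) = 2 ^ N * 2 := pow_succ 2 N
    have e2 : (2:ℕ) ^ (N + 2) = 2 ^ (N + 1) * 2 := pow_succ 2 (N + 1)
    have hk2 : k < 2 ^ N :=
      lt_of_lt_of_le (Nat.lt_pow_succ_log_self one_lt_two k)
        (Nat.pow_le_pow_right (by norm_num) hN)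
    rcases le_or_gt (2 ^ (N + 1)) q with hq | hq
    · -- split off A(2^{N+1}) on the right
      obtain ⟨q', rfl⟩ : ∃ q', q = q' + 2 ^ (N + 1) := ⟨q - 2 ^ (N + 1), by omega⟩
      have h1 : p + k + q' = 2 ^ (N + 1) := by omega
      have heq : Adeg K p * Submodule.span K {x} * Adeg K (q' + 2 ^ (N + 1)) =
          Adeg K p * Submodule.span K {x} * Adeg K q' * Adeg K (2 ^ (N + 1)) := by
        rw [Adeg_add]; simp only [mul_assoc]
      rw [heq]
      refine le_trans (mul_le_mul' (le_trans (ih p q' h1) (hWU N)) le_rfl) ?_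
      rw [Submodule.add_eq_sup]; exact le_sup_left
    · rcases le_or_gt (2 ^ (N + 1)) p with hp | hp
      · -- split off A(2^{N+1}) on the left
        obtain ⟨p', rfl⟩ : ∃ p', p = 2 ^ (N + 1) + p' := ⟨p - 2 ^ (N + 1), by omega⟩
        have h1 : p' + k + q = 2 ^ (N + 1) := by omega
        have heq : Adeg K (2 ^ (N + 1) + p') * Submodule.span K {x} * Adeg K q =
            Adeg K (2 ^ (N + 1)) * (Adeg K p' * Submodule.span K {x} * Adeg K q) := by
          rw [Adeg_add]; simp only [mul_assoc]
        rw [heq]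
        refine le_trans (mul_le_mul' le_rfl (le_trans (ih p' q h1) (hWU N))) ?_
        rw [Submodule.add_eq_sup]; exact le_sup_right
      · -- split off A(2^N) on both sides
        have hp2 : 2 ^ N ≤ p := by omega
        have hq2 : 2 ^ N ≤ q := by omega
        obtain ⟨p', rfl⟩ : ∃ p', p = 2 ^ N + p' := ⟨p - 2 ^ N, by omega⟩
        obtain ⟨q', rfl⟩ : ∃ q', q = q' + 2 ^ N := ⟨q - 2 ^ N, by omega⟩
        have h1 : p' + k + q' = 2 ^ (N + 1) := by omega
        have hA2 : Adeg K (2 ^ N) * Adeg K (2 ^ N) = Adeg K (2 ^ (N + 1)) := by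
          rw [← Adeg_add]; congr 1; omega
        have heq : Adeg K (2 ^ N + p') * Submodule.span K {x} * Adeg K (q' + 2 ^ N) =
            Adeg K (2 ^ N) * (Adeg K p' * Submodule.span K {x} * Adeg K q') *
              Adeg K (2 ^ N) := by
          rw [Adeg_add, Adeg_add]; simp only [mul_assoc]
        rw [heq]
        refine le_trans (mul_le_mul'
          (mul_le_mul' le_rfl (ih p' q' h1)) le_rfl) ?_
        rw [mul_add, add_mul]
        have t1 : Adeg K (2 ^ N) * (U N * Adeg K (2 ^ N)) * Adeg K (2 ^ N) ≤
            U (N + 1) * Adeg K (2 ^ (N + 1)) := by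
          have e : Adeg K (2 ^ N) * (U N * Adeg K (2 ^ N)) * Adeg K (2 ^ N) =
              (Adeg K (2 ^ N) * U N) * (Adeg K (2 ^ N) * Adeg K (2 ^ N)) := by
            simp only [mul_assoc]
          rw [e, hA2]
          exact mul_le_mul' (habsl N) le_rfl
        have t2 : Adeg K (2 ^ N) * (Adeg K (2 ^ N) * U N) * Adeg K (2 ^ N) ≤
            Adeg K (2 ^ (N + 1)) * U (N + 1) := by
          have e : Adeg K (2 ^ N) * (Adeg K (2 ^ N) * U N) * Adeg K (2 ^ N) =
              (Adeg K (2 ^ N) * Adeg K (2 ^ N)) * (U N * Adeg K (2 ^ N)) := by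
            simp only [mul_assoc]
          rw [e, hA2]
          exact mul_le_mul' le_rfl (habsr N)
        rw [Submodule.add_eq_sup, Submodule.add_eq_sup]
        exact sup_le (le_trans t1 le_sup_left) (le_trans t2 le_sup_right)

/-- Multiplying an element of `E(k)` (with `k ≥ 1`) by a generator of degree one
lands in `E(k+1)`. -/
lemma gen_mul {K : Type*} [Field K] (U : ℕ → Submodule K (FreeAlgebra K (Fin 2)))
    (habs : ∀ m, Adeg K (2 ^ m) * U m + U m * Adeg K (2 ^ m) ≤ U (m + 1))
    {k : ℕ} {x : FreeAlgebra K (Fin 2)} (hx : x ∈ Edeg K U k)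
    {g : FreeAlgebra K (Fin 2)} (hg : g ∈ Adeg K 1) :
    g * x ∈ Edeg K U (k + 1) ∧ x * g ∈ Edeg K U (k + 1) := by
  have hxk : x ∈ Adeg K k := (Submodule.mem_inf.mp hx).1
  have hN : Nat.log 2 k + 1 ≤ Nat.log 2 (k + 1) + 1 :=
    Nat.add_le_add_right (Nat.log_mono_right (Nat.le_succ k)) 1
  have hpow : (2:ℕ) ^ (Nat.log 2 (k + 1) + 1 + 1) = 2 ^ (Nat.log 2 (k + 1) + 2) := rfl
  constructor
  · refine Submodule.mem_inf.mpr ⟨?_, ?_⟩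
    · have := Submodule.mul_mem_mul hg hxk
      rw [← Adeg_add, Nat.add_comm 1 k] at this
      exact this
    · simp only [Submodule.mem_iInf, Submodule.mem_comap, LinearMap.coe_comp,
        Function.comp_apply, LinearMap.mulLeft_apply, LinearMap.mulRight_apply]
      intro i j hij a ha b hb
      have hag : a * g ∈ Adeg K (i + 1) := by
        have := Submodule.mul_mem_mul ha hg
        rwa [← Adeg_add] at this
      have harith : (i + 1) + k + j = 2 ^ ((Nat.log 2 (k + 1) + 1) + 1) := by omega
      have heq : a * (g * x) * b = a * g * x * b := by simp only [mul_assoc]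
      rw [heq]
      exact key_lemma U habs hx (Nat.log 2 (k + 1) + 1) hN (i + 1) j harith
        (Submodule.mul_mem_mul
          (Submodule.mul_mem_mul hag (Submodule.mem_span_singleton_self x)) hb)
  · refine Submodule.mem_inf.mpr ⟨?_, ?_⟩
    · have := Submodule.mul_mem_mul hxk hg
      rwa [← Adeg_add] at this
    · simp only [Submodule.mem_iInf, Submodule.mem_comap, LinearMap.coe_comp,
        Function.comp_apply, LinearMap.mulLeft_apply, LinearMap.mulRight_apply]
      intro i j hij a ha b hb
      have hgb : g * b ∈ Adeg K (1 + j) := by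
        have := Submodule.mul_mem_mul hg hb
        rwa [← Adeg_add] at this
      have harith : i + k + (1 + j) = 2 ^ ((Nat.log 2 (k + 1) + 1) + 1) := by omega
      have heq : a * (x * g) * b = a * x * (g * b) := by simp only [mul_assoc]
      rw [heq]
      exact key_lemma U habs hx (Nat.log 2 (k + 1) + 1) hN i (1 + j) harith
        (Submodule.mul_mem_mul
          (Submodule.mul_mem_mul ha (Submodule.mem_span_singleton_self x)) hgb)

/-- Under the four properties of the general construction, `E` is a two-sided
ideal of the free algebra `A`. -/
theorem stmt3 {K : Type*} [Field K]
    (U V : ℕ → Submodule K (FreeAlgebra K (Fin 2)))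
    (hUA : ∀ m, U m ≤ Adeg K (2 ^ m)) (hVA : ∀ m, V m ≤ Adeg K (2 ^ m))
    (hV0 : V 0 = Adeg K 1) (hU0 : U 0 = ⊥)
    (hVmon : ∀ m, ∃ S : Set (FreeAlgebra K (Fin 2)),
      (∀ x ∈ S, IsMonomial K x) ∧ V m = Submodule.span K S)
    (hsum : ∀ m, V m ⊔ U m = Adeg K (2 ^ m)) (hint : ∀ m, V m ⊓ U m = ⊥)
    (habs : ∀ m, Adeg K (2 ^ m) * U m + U m * Adeg K (2 ^ m) ≤ U (m + 1))
    (hVV : ∀ m, V (m + 1) ≤ V m * V m) :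
    ∀ a x : FreeAlgebra K (Fin 2),
      x ∈ Eideal K U → a * x ∈ Eideal K U ∧ x * a ∈ Eideal K U := by
  intro a
  induction a using FreeAlgebra.induction with
  | grade0 r =>
    intro x hx
    constructor
    · rw [← Algebra.smul_def]; exact Submodule.smul_mem _ r hx
    · rw [← Algebra.commutes, ← Algebra.smul_def]; exact Submodule.smul_mem _ r hx
  | grade1 i =>
    intro x hx
    have hg : FreeAlgebra.ι K i ∈ Adeg K 1 := by
      rw [Adeg, pow_one]; exact Submodule.subset_span ⟨i, rfl⟩
    have main : Eideal K U ≤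
        Submodule.comap (LinearMap.mulLeft K (FreeAlgebra.ι K i)) (Eideal K U) ⊓
        Submodule.comap (LinearMap.mulRight K (FreeAlgebra.ι K i)) (Eideal K U) := by
      simp only [Eideal]
      refine iSup_le fun k => iSup_le fun hk => ?_
      intro y hy
      obtain ⟨h1, h2⟩ := gen_mul U habs hy hg
      have hE : Edeg K U (k + 1) ≤ ⨆ (k : ℕ) (_ : 1 ≤ k), Edeg K U k :=
        le_iSup_of_le (k + 1) (le_iSup_of_le (Nat.le_add_left 1 k) le_rfl)
      refine Submodule.mem_inf.mpr ⟨Submodule.mem_comap.mpr ?_, Submodule.mem_comap.mpr ?_⟩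
      · simpa only [LinearMap.mulLeft_apply, Eideal] using hE h1
      · simpa only [LinearMap.mulRight_apply, Eideal] using hE h2
    have := main hx
    rw [Submodule.mem_inf, Submodule.mem_comap, Submodule.mem_comap,
      LinearMap.mulLeft_apply, LinearMap.mulRight_apply] at this
    exact this
  | mul a b iha ihb =>
    intro x hx
    refine ⟨?_, ?_⟩
    · rw [mul_assoc]; exact (iha (b * x) (ihb x hx).1).1
    · rw [← mul_assoc]; exact (ihb (x * a) (iha x hx).2).2
  | add a b iha ihb =>
    intro x hx
    exact ⟨by rw [add_mul]; exact add_mem (iha x hx).1 (ihb x hx).1,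
           by rw [mul_add]; exact add_mem (iha x hx).2 (ihb x hx).2⟩
end

section
/- Write k = 2^{p_1} + … + 2^{p_t} with 0 ≤ p_1 < p_2 < … < p_t, and define U^<(k) = Σ_i A(2^{p_1}+…+2^{p_{i-1}}) U(2^{p_i}) A(2^{p_{i+1}}+…+2^{p_t}) and V^<(k) = V(2^{p_1})⋯V(2^{p_t}), and symmetrically U^>(k), V^>(k) with reversed order. Then for all k, A(k) = U^<(k) ⊕ V^<(k) = U^>(k) ⊕ V^>(k). -/
open Pointwise



/-- The exponents `p₁ < p₂ < … < p_t` of the binary expansion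
`k = 2^{p₁} + … + 2^{p_t}`, in increasing order. -/
def bitsOf (k : ℕ) : List ℕ := (List.range k).filter (fun p => k.testBit p)

/-- `V^<(k) = V(2^{p₁}) ⋯ V(2^{p_t})` (increasing order); here `V m` plays the role
of `V(2^m)`.  For `k = 0` this is the unit submodule (dimension one). -/
noncomputable def Vlt (K : Type*) [Field K] (V : ℕ → Submodule K (FreeAlgebra K (Fin 2)))
    (k : ℕ) : Submodule K (FreeAlgebra K (Fin 2)) :=
  ((bitsOf k).map V).prod

/-- `V^>(k) = V(2^{p_t}) ⋯ V(2^{p₁})` (decreasing order). -/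
noncomputable def Vgt (K : Type*) [Field K] (V : ℕ → Submodule K (FreeAlgebra K (Fin 2)))
    (k : ℕ) : Submodule K (FreeAlgebra K (Fin 2)) :=
  (((bitsOf k).reverse).map V).prod

/-- `U^<(k) = Σ_i A(2^{p₁}+…+2^{p_{i-1}}) U(2^{p_i}) A(2^{p_{i+1}}+…+2^{p_t})`. -/
noncomputable def Ult (K : Type*) [Field K] (U : ℕ → Submodule K (FreeAlgebra K (Fin 2)))
    (k : ℕ) : Submodule K (FreeAlgebra K (Fin 2)) :=
  ⨆ i : Fin (bitsOf k).length,
    Adeg K (((bitsOf k).take i.val).map (fun p => 2 ^ p)).sum * U ((bitsOf k).get i) *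
      Adeg K (((bitsOf k).drop (i.val + 1)).map (fun p => 2 ^ p)).sum

/-- `U^>(k) = Σ_i A(2^{p_t}+…+2^{p_{i+1}}) U(2^{p_i}) A(2^{p_{i-1}}+…+2^{p₁})`,
i.e. the analogue of `U^<` for the reversed (decreasing) order of the powers. -/
noncomputable def Ugt (K : Type*) [Field K] (U : ℕ → Submodule K (FreeAlgebra K (Fin 2)))
    (k : ℕ) : Submodule K (FreeAlgebra K (Fin 2)) :=
  ⨆ i : Fin (bitsOf k).reverse.length,
    Adeg K ((((bitsOf k).reverse.take i.val).map (fun p => 2 ^ p)).sum) *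
      U ((bitsOf k).reverse.get i) *
      Adeg K ((((bitsOf k).reverse.drop (i.val + 1)).map (fun p => 2 ^ p)).sum)

section Aux
variable {K : Type*} [Field K]

lemma bits_partial (k : ℕ) : ∀ n : ℕ,
    ((((List.range n).filter (fun p => k.testBit p)).map (fun p => 2 ^ p)).sum) = k % 2 ^ n := by
  intro n
  induction n with
  | zero => simp [Nat.mod_one]
  | succ n ih =>
    rw [List.range_succ, List.filter_append, List.map_append, List.sum_append, ih,
      pow_succ, Nat.mod_mul]
    by_cases h : k.testBit n
    · have h2 : k / 2 ^ n % 2 = 1 := by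
        have := Nat.testBit_eq_decide_div_mod_eq (x := k) (i := n); rw [h] at this
        exact of_decide_eq_true this.symm
      simp [h, h2, Nat.mul_comm]
    · have h2 : k / 2 ^ n % 2 = 0 := by
        have h3 : ¬ (k / 2 ^ n % 2 = 1) := by
          intro hc
          exact h (by rw [Nat.testBit_eq_decide_div_mod_eq]; exact decide_eq_true hc)
        omega
      simp [h, h2]

lemma bitsOf_sum (k : ℕ) : ((bitsOf k).map (fun p => 2 ^ p)).sum = k := by
  rw [bitsOf, bits_partial k k, Nat.mod_eq_of_lt (Nat.lt_two_pow_self (n := k))]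

noncomputable def B (K : Type*) [Field K] : Module.Basis (FreeMonoid (Fin 2)) K (FreeAlgebra K (Fin 2)) :=
  FreeAlgebra.basisFreeMonoid K (Fin 2)

variable {K : Type*} [Field K]

lemma B_apply (w : FreeMonoid (Fin 2)) :
    B K w = (FreeAlgebra.equivMonoidAlgebraFreeMonoid (R := K) (X := Fin 2)).symm
      (MonoidAlgebra.single w 1) := by
  simp only [B, FreeAlgebra.basisFreeMonoid, Module.Basis.map_apply]
  rfl

lemma B_one : B K 1 = 1 := by
  rw [B_apply, ← MonoidAlgebra.one_def, map_one]

lemma B_mul (u v : FreeMonoid (Fin 2)) : B K (u * v) = B K u * B K v := by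
  rw [B_apply, B_apply, B_apply, ← map_mul]
  congr 1
  rw [MonoidAlgebra.single_mul_single, one_mul]

lemma B_of (i : Fin 2) : B K (FreeMonoid.of i) = FreeAlgebra.ι K i := by
  rw [B_apply]
  apply (FreeAlgebra.equivMonoidAlgebraFreeMonoid (R := K) (X := Fin 2)).injective
  simp [FreeAlgebra.equivMonoidAlgebraFreeMonoid]

lemma Adeg_mul_Adeg (a b : ℕ) : Adeg K a * Adeg K b = Adeg K (a + b) := by
  rw [Adeg, Adeg, Adeg, ← pow_add]

lemma Adeg_le_span (n : ℕ) :
    Adeg K n ≤ Submodule.span K ((B K) '' {w : FreeMonoid (Fin 2) | w.toList.length = n}) := by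
  induction n with
  | zero =>
    rw [Adeg, pow_zero, Submodule.one_eq_span]
    apply Submodule.span_le.mpr
    rintro x rfl
    apply Submodule.subset_span
    exact ⟨1, rfl, B_one⟩
  | succ n ih =>
    have h1 : Adeg K (n + 1) = Adeg K n * Submodule.span K (Set.range (FreeAlgebra.ι K)) := by
      rw [Adeg, Adeg, pow_succ]
    rw [h1]
    calc Adeg K n * Submodule.span K (Set.range (FreeAlgebra.ι K))
        ≤ Submodule.span K ((B K) '' {w : FreeMonoid (Fin 2) | w.toList.length = n}) *
            Submodule.span K (Set.range (FreeAlgebra.ι K)) := mul_le_mul' ih le_rfl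
      _ = Submodule.span K ((B K) '' {w : FreeMonoid (Fin 2) | w.toList.length = n} *
            Set.range (FreeAlgebra.ι K)) := Submodule.span_mul_span K _ _
      _ ≤ Submodule.span K ((B K) '' {w : FreeMonoid (Fin 2) | w.toList.length = n + 1}) := by
          apply Submodule.span_mono
          rintro x ⟨y, ⟨w, hw, rfl⟩, z, ⟨i, rfl⟩, rfl⟩
          refine ⟨w * FreeMonoid.of i, ?_, by rw [B_mul, B_of]⟩
          have hw' : (FreeMonoid.toList w).length = n := hw
          simp [FreeMonoid.toList_mul, hw']

lemma toList_inj {a b : FreeMonoid (Fin 2)} (h : FreeMonoid.toList a = FreeMonoid.toList b) :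
    a = b := by
  rw [← FreeMonoid.ofList_toList a, h, FreeMonoid.ofList_toList]

open Classical in
noncomputable def rc (K : Type*) [Field K] (v : FreeMonoid (Fin 2)) :
    FreeAlgebra K (Fin 2) →ₗ[K] FreeAlgebra K (Fin 2) :=
  (B K).constr K (fun s => if v.toList <:+ s.toList then
    B K (FreeMonoid.ofList (s.toList.take (s.toList.length - v.toList.length))) else 0)

open Classical in
lemma rc_basis (v s : FreeMonoid (Fin 2)) :
    rc K v (B K s) = if v.toList <:+ s.toList then
      B K (FreeMonoid.ofList (s.toList.take (s.toList.length - v.toList.length))) else 0 := by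
  rw [rc, Module.Basis.constr_basis]

lemma rc_basis_suffix (q v : FreeMonoid (Fin 2)) : rc K v (B K (q * v)) = B K q := by
  rw [rc_basis, if_pos (by rw [FreeMonoid.toList_mul]; exact List.suffix_append _ _)]
  congr 1
  rw [FreeMonoid.toList_mul]
  have h1 : (FreeMonoid.toList q ++ FreeMonoid.toList v).length - (FreeMonoid.toList v).length
      = (FreeMonoid.toList q).length := by simp
  rw [h1, List.take_left]
  rfl

lemma rc_basis_not_suffix (v s : FreeMonoid (Fin 2)) (h : ¬ v.toList <:+ s.toList) :
    rc K v (B K s) = 0 := by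
  rw [rc_basis, if_neg h]

lemma rc_mul_basis_ne (u v v' : FreeMonoid (Fin 2)) (hlen : v'.toList.length = v.toList.length)
    (h : v' ≠ v) : rc K v (B K u * B K v') = 0 := by
  rw [← B_mul, rc_basis_not_suffix]
  intro hsuf
  rw [FreeMonoid.toList_mul] at hsuf
  obtain ⟨t, ht⟩ := hsuf
  have hl : t.length = (FreeMonoid.toList u).length := by
    have := congrArg List.length ht
    simp only [List.length_append] at this
    omega
  exact h (toList_inj (List.append_inj ht hl).2.symm)

lemma coord_basis_self (a : FreeMonoid (Fin 2)) : (B K).coord a (B K a) = 1 := by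
  simp only [Module.Basis.coord_apply, Module.Basis.repr_self, Finsupp.single_eq_same]

lemma coord_basis_ne {a s : FreeMonoid (Fin 2)} (h : s ≠ a) : (B K).coord a (B K s) = 0 := by
  simp only [Module.Basis.coord_apply, Module.Basis.repr_self]
  exact Finsupp.single_eq_of_ne' h

lemma coord_rc (u v : FreeMonoid (Fin 2)) (t : FreeAlgebra K (Fin 2)) :
    (B K).coord (u * v) t = (B K).coord u (rc K v t) := by
  have key : ((B K).coord u) ∘ₗ (rc K v) = (B K).coord (u * v) := by
    apply (B K).ext; intro s
    rw [LinearMap.comp_apply]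
    by_cases h : v.toList <:+ s.toList
    · obtain ⟨t', ht'⟩ := h
      have hs : s = FreeMonoid.ofList t' * v := by
        apply toList_inj
        rw [FreeMonoid.toList_mul, FreeMonoid.toList_ofList, ht']
      rw [hs, rc_basis_suffix]
      by_cases h2 : FreeMonoid.ofList t' = u
      · rw [h2, coord_basis_self, coord_basis_self]
      · rw [coord_basis_ne h2, coord_basis_ne (fun hc => h2 (mul_right_cancel hc))]
    · rw [rc_basis_not_suffix v s h, map_zero, coord_basis_ne]
      intro hc; subst hc
      exact h (by rw [FreeMonoid.toList_mul]; exact List.suffix_append _ _)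
  rw [← key, LinearMap.comp_apply]

lemma rc_formula {b : ℕ} (v : FreeMonoid (Fin 2)) (hv : v.toList.length = b)
    (p r : FreeAlgebra K (Fin 2))
    (hr : r ∈ Submodule.span K ((B K) '' {w : FreeMonoid (Fin 2) | w.toList.length = b})) :
    rc K v (p * r) = ((B K).coord v r) • p := by
  induction hr using Submodule.span_induction with
  | mem x hx =>
    obtain ⟨w, hw, rfl⟩ := hx
    have hw' : (FreeMonoid.toList w).length = b := hw
    have heq : (rc K v) ∘ₗ (LinearMap.mulRight K (B K w))
        = ((B K).coord v (B K w)) • (LinearMap.id (R := K) (M := FreeAlgebra K (Fin 2))) := by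
      apply (B K).ext; intro u
      rw [LinearMap.comp_apply, LinearMap.mulRight_apply, LinearMap.smul_apply,
        LinearMap.id_apply]
      by_cases h : w = v
      · subst h
        rw [← B_mul, rc_basis_suffix, coord_basis_self, one_smul]
      · rw [rc_mul_basis_ne u v w (by rw [hw', hv]) h, coord_basis_ne h, zero_smul]
    exact LinearMap.congr_fun heq p
  | zero => rw [mul_zero, map_zero, map_zero, zero_smul]
  | add x y _ _ hx hy => rw [mul_add, map_add, map_add, add_smul, hx, hy]
  | smul c x _ hx => rw [mul_smul_comm, map_smul, map_smul, hx, smul_assoc]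

open Classical in
noncomputable def lc (K : Type*) [Field K] (w : FreeMonoid (Fin 2)) :
    FreeAlgebra K (Fin 2) →ₗ[K] FreeAlgebra K (Fin 2) :=
  (B K).constr K (fun s => if w.toList <+: s.toList then
    B K (FreeMonoid.ofList (s.toList.drop w.toList.length)) else 0)

open Classical in
lemma lc_basis (w s : FreeMonoid (Fin 2)) :
    lc K w (B K s) = if w.toList <+: s.toList then
      B K (FreeMonoid.ofList (s.toList.drop w.toList.length)) else 0 := by
  rw [lc, Module.Basis.constr_basis]

lemma lc_basis_prefix (w z : FreeMonoid (Fin 2)) : lc K w (B K (w * z)) = B K z := by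
  rw [lc_basis, if_pos (by rw [FreeMonoid.toList_mul]; exact List.prefix_append _ _)]
  congr 1
  rw [FreeMonoid.toList_mul, List.drop_left]
  rfl

lemma lc_basis_not_prefix (w s : FreeMonoid (Fin 2)) (h : ¬ w.toList <+: s.toList) :
    lc K w (B K s) = 0 := by
  rw [lc_basis, if_neg h]

lemma lc_mul_basis_ne (u' w z : FreeMonoid (Fin 2)) (hlen : u'.toList.length = w.toList.length)
    (h : u' ≠ w) : lc K w (B K u' * B K z) = 0 := by
  rw [← B_mul, lc_basis_not_prefix]
  intro hpre
  rw [FreeMonoid.toList_mul] at hpre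
  obtain ⟨t, ht⟩ := hpre
  exact h (toList_inj (List.append_inj ht.symm hlen).1)

lemma coord_lc (u v : FreeMonoid (Fin 2)) (t : FreeAlgebra K (Fin 2)) :
    (B K).coord (u * v) t = (B K).coord v (lc K u t) := by
  have key : ((B K).coord v) ∘ₗ (lc K u) = (B K).coord (u * v) := by
    apply (B K).ext; intro s
    rw [LinearMap.comp_apply]
    by_cases h : u.toList <+: s.toList
    · obtain ⟨t', ht'⟩ := h
      have hs : s = u * FreeMonoid.ofList t' := by
        apply toList_inj
        rw [FreeMonoid.toList_mul, FreeMonoid.toList_ofList, ht']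
      rw [hs, lc_basis_prefix]
      by_cases h2 : FreeMonoid.ofList t' = v
      · rw [h2, coord_basis_self, coord_basis_self]
      · rw [coord_basis_ne h2, coord_basis_ne (fun hc => h2 (mul_left_cancel hc))]
    · rw [lc_basis_not_prefix u s h, map_zero, coord_basis_ne]
      intro hc; subst hc
      exact h (by rw [FreeMonoid.toList_mul]; exact List.prefix_append _ _)
  rw [← key, LinearMap.comp_apply]

lemma lc_formula {a : ℕ} (w : FreeMonoid (Fin 2)) (hw : w.toList.length = a)
    (p r : FreeAlgebra K (Fin 2))
    (hp : p ∈ Submodule.span K ((B K) '' {w' : FreeMonoid (Fin 2) | w'.toList.length = a})) :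
    lc K w (p * r) = ((B K).coord w p) • r := by
  induction hp using Submodule.span_induction with
  | mem x hx =>
    obtain ⟨u', hu', rfl⟩ := hx
    have hu'' : (FreeMonoid.toList u').length = a := hu'
    have heq : (lc K w) ∘ₗ (LinearMap.mulLeft K (B K u'))
        = ((B K).coord w (B K u')) • (LinearMap.id (R := K) (M := FreeAlgebra K (Fin 2))) := by
      apply (B K).ext; intro z
      rw [LinearMap.comp_apply, LinearMap.mulLeft_apply, LinearMap.smul_apply,
        LinearMap.id_apply]
      by_cases h : u' = w
      · subst h
        rw [← B_mul, lc_basis_prefix, coord_basis_self, one_smul]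
      · rw [lc_mul_basis_ne u' w z (by rw [hu'', hw]) h, coord_basis_ne h, zero_smul]
    exact LinearMap.congr_fun heq r
  | zero => rw [zero_mul, map_zero, map_zero, zero_smul]
  | add x y _ _ hx hy => rw [add_mul, map_add, map_add, add_smul, hx, hy]
  | smul c x _ hx => rw [smul_mul_assoc, map_smul, map_smul, hx, smul_assoc]

lemma coord_zero_of_len {n : ℕ} {t : FreeAlgebra K (Fin 2)} (ht : t ∈ Adeg K n)
    {s : FreeMonoid (Fin 2)} (hs : s.toList.length ≠ n) : (B K).coord s t = 0 := by
  have hmem := Adeg_le_span n ht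
  rw [Module.Basis.mem_span_image] at hmem
  by_contra hc
  have : s ∈ ((B K).repr t).support := Finsupp.mem_support_iff.mpr hc
  exact hs (hmem this)

lemma eq_zero_of_rc {a b : ℕ} {t : FreeAlgebra K (Fin 2)} (ht : t ∈ Adeg K (a + b))
    (h : ∀ v : FreeMonoid (Fin 2), v.toList.length = b → rc K v t = 0) : t = 0 := by
  apply (B K).forall_coord_eq_zero_iff.mp
  intro s
  by_cases hs : s.toList.length = a + b
  · set u := FreeMonoid.ofList (s.toList.take a) with hu
    set v := FreeMonoid.ofList (s.toList.drop a) with hv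
    have hsuv : s = u * v := by
      apply toList_inj
      rw [FreeMonoid.toList_mul, hu, hv, FreeMonoid.toList_ofList, FreeMonoid.toList_ofList,
        List.take_append_drop]
    have hvlen : v.toList.length = b := by
      rw [hv, FreeMonoid.toList_ofList, List.length_drop, hs]
      omega
    rw [hsuv, coord_rc, h v hvlen, map_zero]
  · exact coord_zero_of_len ht hs

lemma eq_zero_of_lc {a b : ℕ} {t : FreeAlgebra K (Fin 2)} (ht : t ∈ Adeg K (a + b))
    (h : ∀ w : FreeMonoid (Fin 2), w.toList.length = a → lc K w t = 0) : t = 0 := by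
  apply (B K).forall_coord_eq_zero_iff.mp
  intro s
  by_cases hs : s.toList.length = a + b
  · set u := FreeMonoid.ofList (s.toList.take a) with hu
    set v := FreeMonoid.ofList (s.toList.drop a) with hv
    have hsuv : s = u * v := by
      apply toList_inj
      rw [FreeMonoid.toList_mul, hu, hv, FreeMonoid.toList_ofList, FreeMonoid.toList_ofList,
        List.take_append_drop]
    have hulen : u.toList.length = a := by
      rw [hu, FreeMonoid.toList_ofList, List.length_take]
      omega
    rw [hsuv, coord_lc, h u hulen, map_zero]
  · exact coord_zero_of_len ht hs

lemma inf_bot_left_factor {a b : ℕ} {P Q R S : Submodule K (FreeAlgebra K (Fin 2))}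
    (hP : P ≤ Adeg K a) (hQ : Q ≤ Adeg K a) (hR : R ≤ Adeg K b) (hS : S ≤ Adeg K b)
    (hPQ : P ⊓ Q = ⊥) : (P * R) ⊓ (Q * S) = ⊥ := by
  rw [eq_bot_iff]
  rintro t ht
  rw [Submodule.mem_inf] at ht
  obtain ⟨h1, h2⟩ := ht
  have key : ∀ (X Y : Submodule K (FreeAlgebra K (Fin 2))), Y ≤ Adeg K b →
      t ∈ X * Y → ∀ v : FreeMonoid (Fin 2), v.toList.length = b → rc K v t ∈ X := by
    intro X Y hY htm v hv
    refine Submodule.mul_induction_on htm ?_ ?_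
    · intro p hp r hr
      rw [rc_formula v hv p r (Adeg_le_span b (hY hr))]
      exact X.smul_mem _ hp
    · intro x y hx hy
      rw [map_add]; exact add_mem hx hy
  have hz : ∀ v : FreeMonoid (Fin 2), v.toList.length = b → rc K v t = 0 := by
    intro v hv
    have hzP := key P R hR h1 v hv
    have hzQ := key Q S hS h2 v hv
    have : rc K v t ∈ P ⊓ Q := ⟨hzP, hzQ⟩
    rw [hPQ] at this
    exact this
  have htA : t ∈ Adeg K (a + b) := by
    rw [← Adeg_mul_Adeg]
    exact mul_le_mul' hP hR h1
  rw [Submodule.mem_bot]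
  exact eq_zero_of_rc htA hz

lemma inf_bot_right_factor {a b : ℕ} {P Q R S : Submodule K (FreeAlgebra K (Fin 2))}
    (hP : P ≤ Adeg K a) (hQ : Q ≤ Adeg K a) (hR : R ≤ Adeg K b) (hS : S ≤ Adeg K b)
    (hRS : R ⊓ S = ⊥) : (P * R) ⊓ (Q * S) = ⊥ := by
  rw [eq_bot_iff]
  rintro t ht
  rw [Submodule.mem_inf] at ht
  obtain ⟨h1, h2⟩ := ht
  have key : ∀ (X Y : Submodule K (FreeAlgebra K (Fin 2))), X ≤ Adeg K a →
      t ∈ X * Y → ∀ w : FreeMonoid (Fin 2), w.toList.length = a → lc K w t ∈ Y := by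
    intro X Y hX htm w hw
    refine Submodule.mul_induction_on htm ?_ ?_
    · intro p hp r hr
      rw [lc_formula w hw p r (Adeg_le_span a (hX hp))]
      exact Y.smul_mem _ hr
    · intro x y hx hy
      rw [map_add]; exact add_mem hx hy
  have hz : ∀ w : FreeMonoid (Fin 2), w.toList.length = a → lc K w t = 0 := by
    intro w hw
    have hzR := key P R hP h1 w hw
    have hzS := key Q S hQ h2 w hw
    have : lc K w t ∈ R ⊓ S := ⟨hzR, hzS⟩
    rw [hRS] at this
    exact this
  have htA : t ∈ Adeg K (a + b) := by
    rw [← Adeg_mul_Adeg]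
    exact mul_le_mul' hP hR h1
  rw [Submodule.mem_bot]
  exact eq_zero_of_lc htA hz

noncomputable def UL (K : Type*) [Field K] (U : ℕ → Submodule K (FreeAlgebra K (Fin 2)))
    (L : List ℕ) : Submodule K (FreeAlgebra K (Fin 2)) :=
  ⨆ i : Fin L.length,
    Adeg K ((L.take i.val).map (fun p => 2 ^ p)).sum * U (L.get i) *
      Adeg K ((L.drop (i.val + 1)).map (fun p => 2 ^ p)).sum

noncomputable def VL (K : Type*) [Field K] (V : ℕ → Submodule K (FreeAlgebra K (Fin 2)))
    (L : List ℕ) : Submodule K (FreeAlgebra K (Fin 2)) :=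
  (L.map V).prod

lemma iSup_fin_succ {α : Type*} [CompleteLattice α] {n : ℕ} (f : Fin (n + 1) → α) :
    (⨆ i, f i) = f 0 ⊔ ⨆ i : Fin n, f i.succ := by
  apply le_antisymm
  · apply iSup_le; intro i
    induction i using Fin.cases with
    | zero => exact le_sup_left
    | succ j => exact le_sup_of_le_right (le_iSup (fun j => f j.succ) j)
  · exact sup_le (le_iSup f 0) (iSup_le fun j => le_iSup f j.succ)

lemma UL_nil (U : ℕ → Submodule K (FreeAlgebra K (Fin 2))) : UL K U [] = ⊥ := by
  rw [UL]
  exact le_bot_iff.mp (iSup_le fun i => i.elim0)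

lemma VL_nil (V : ℕ → Submodule K (FreeAlgebra K (Fin 2))) : VL K V [] = 1 := by
  rw [VL, List.map_nil, List.prod_nil]

lemma VL_cons (V : ℕ → Submodule K (FreeAlgebra K (Fin 2))) (p : ℕ) (L : List ℕ) :
    VL K V (p :: L) = V p * VL K V L := by
  rw [VL, VL, List.map_cons, List.prod_cons]

lemma Adeg_zero : Adeg K 0 = 1 := by rw [Adeg, pow_zero]

lemma UL_cons (U : ℕ → Submodule K (FreeAlgebra K (Fin 2))) (p : ℕ) (L : List ℕ) :
    UL K U (p :: L) = (U p * Adeg K (L.map (fun p => 2 ^ p)).sum) ⊔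
      (Adeg K (2 ^ p) * UL K U L) := by
  rw [UL]
  refine (iSup_fin_succ (n := L.length) _).trans ?_
  congr 1
  · simp [Adeg_zero]
  · rw [UL, Submodule.mul_iSup]
    apply iSup_congr
    intro j
    have h1 : (p :: L).take (j.succ.val) = p :: L.take j.val := rfl
    have h2 : (p :: L).drop (j.succ.val + 1) = L.drop (j.val + 1) := rfl
    have h3 : (p :: L).get j.succ = L.get j := rfl
    rw [h1, h2, h3, List.map_cons, List.sum_cons, ← Adeg_mul_Adeg]
    simp only [mul_assoc]

lemma main_list (U V : ℕ → Submodule K (FreeAlgebra K (Fin 2)))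
    (hUA : ∀ m, U m ≤ Adeg K (2 ^ m)) (hVA : ∀ m, V m ≤ Adeg K (2 ^ m))
    (hsum : ∀ m, V m ⊔ U m = Adeg K (2 ^ m)) (hint : ∀ m, V m ⊓ U m = ⊥) :
    ∀ L : List ℕ, (UL K U L ⊔ VL K V L = Adeg K (L.map (fun p => 2 ^ p)).sum ∧
      UL K U L ⊓ VL K V L = ⊥) := by
  intro L
  induction L with
  | nil =>
    rw [UL_nil, VL_nil, List.map_nil, List.sum_nil, Adeg_zero, bot_sup_eq, bot_inf_eq]
    exact ⟨rfl, rfl⟩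
  | cons p L ih =>
    obtain ⟨ihs, ihi⟩ := ih
    set A' := Adeg K (L.map (fun p => 2 ^ p)).sum with hA'
    have hULle : UL K U L ≤ A' := ihs ▸ le_sup_left
    have hVLle : VL K V L ≤ A' := ihs ▸ le_sup_right
    have hS : ((p :: L).map (fun p => 2 ^ p)).sum = 2 ^ p + (L.map (fun p => 2 ^ p)).sum := by
      rw [List.map_cons, List.sum_cons]
    constructor
    · rw [UL_cons, VL_cons, hS, ← Adeg_mul_Adeg]
      apply le_antisymm
      · apply sup_le (sup_le ?_ ?_) ?_
        · exact mul_le_mul' (hUA p) le_rfl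
        · exact mul_le_mul' le_rfl hULle
        · exact mul_le_mul' (hVA p) hVLle
      · rw [← hsum p, Submodule.sup_mul]
        apply sup_le
        · rw [← hA', ← ihs, Submodule.mul_sup]
          apply sup_le
          · exact le_sup_of_le_left
              (le_sup_of_le_right (mul_le_mul' le_sup_left le_rfl))
          · exact le_sup_right
        · exact le_sup_of_le_left le_sup_left
    · rw [UL_cons, VL_cons]
      have h1 : (U p * A') ⊓ (V p * A') = ⊥ := by
        apply inf_bot_left_factor (hUA p) (hVA p) le_rfl le_rfl
        rw [inf_comm]; exact hint p
      have h2 : (V p * UL K U L) ⊓ (V p * VL K V L) = ⊥ :=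
        inf_bot_right_factor (hVA p) (hVA p) hULle hVLle ihi
      rw [eq_bot_iff]
      rintro t ht
      rw [Submodule.mem_inf] at ht
      obtain ⟨ht1, ht2⟩ := ht
      have hle : (U p * Adeg K (L.map (fun p => 2 ^ p)).sum) ⊔ (Adeg K (2 ^ p) * UL K U L)
          ≤ (U p * A') ⊔ (V p * UL K U L) := by
        apply sup_le le_sup_left
        rw [← hsum p, Submodule.sup_mul]
        apply sup_le le_sup_right
        exact le_sup_of_le_left (mul_le_mul' le_rfl hULle)
      have ht1' : t ∈ (U p * A') ⊔ (V p * UL K U L) := hle ht1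
      obtain ⟨x, hx, y, hy, hxy⟩ := Submodule.mem_sup.mp ht1'
      have htV : t ∈ V p * A' := mul_le_mul' le_rfl hVLle ht2
      have hyV : y ∈ V p * A' := mul_le_mul' le_rfl hULle hy
      have hx0 : x = 0 := by
        have hxV : x ∈ V p * A' := by
          have hxe : x = t - y := eq_sub_of_add_eq hxy
          rw [hxe]
          exact sub_mem htV hyV
        have : x ∈ (U p * A') ⊓ (V p * A') := ⟨hx, hxV⟩
        rw [h1] at this
        exact this
      have hyt : y = t := by rw [← hxy, hx0, zero_add]
      have : t ∈ (V p * UL K U L) ⊓ (V p * VL K V L) := ⟨hyt ▸ hy, ht2⟩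
      rw [h2] at this
      exact this

end Aux

/-- Lemma 1.2: for every `k`, `A(k) = U^<(k) ⊕ V^<(k) = U^>(k) ⊕ V^>(k)`. -/
theorem stmt5 {K : Type*} [Field K]
    (U V : ℕ → Submodule K (FreeAlgebra K (Fin 2)))
    (hUA : ∀ m, U m ≤ Adeg K (2 ^ m)) (hVA : ∀ m, V m ≤ Adeg K (2 ^ m))
    (hV0 : V 0 = Adeg K 1) (hU0 : U 0 = ⊥)
    (hVmon : ∀ m, ∃ S : Set (FreeAlgebra K (Fin 2)),
      (∀ x ∈ S, IsMonomial K x) ∧ V m = Submodule.span K S)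
    (hsum : ∀ m, V m ⊔ U m = Adeg K (2 ^ m)) (hint : ∀ m, V m ⊓ U m = ⊥)
    (habs : ∀ m, Adeg K (2 ^ m) * U m + U m * Adeg K (2 ^ m) ≤ U (m + 1))
    (hVV : ∀ m, V (m + 1) ≤ V m * V m) :
    ∀ k : ℕ,
      (Ult K U k ⊔ Vlt K V k = Adeg K k ∧ Ult K U k ⊓ Vlt K V k = ⊥) ∧
      (Ugt K U k ⊔ Vgt K V k = Adeg K k ∧ Ugt K U k ⊓ Vgt K V k = ⊥)  := by
  intro k
  have h1 := main_list U V hUA hVA hsum hint (bitsOf k)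
  have h2 := main_list U V hUA hVA hsum hint (bitsOf k).reverse
  have hk : ((bitsOf k).map (fun p => 2 ^ p)).sum = k := bitsOf_sum k
  have hk2 : ((bitsOf k).reverse.map (fun p => 2 ^ p)).sum = k := by
    rw [List.map_reverse, List.sum_reverse, hk]
  have e1 : Ult K U k = UL K U (bitsOf k) := rfl
  have e2 : Vlt K V k = VL K V (bitsOf k) := rfl
  have e3 : Ugt K U k = UL K U (bitsOf k).reverse := rfl
  have e4 : Vgt K V k = VL K V (bitsOf k).reverse := rfl
  rw [hk] at h1
  rw [hk2] at h2
  exact ⟨⟨by rw [e1, e2, h1.1], by rw [e1, e2, h1.2]⟩,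
         ⟨by rw [e3, e4, h2.1], by rw [e3, e4, h2.2]⟩⟩
end

section
/- With U^<, U^>, V^<, V^> defined from the binary expansion of k as in the general construction, for all k, ℓ ∈ ℕ we have A(k)·U^<(ℓ) ⊆ U^<(k+ℓ) and U^>(k)·A(ℓ) ⊆ U^>(k+ℓ). -/
open List

namespace Stmt6Aux

/- ## Bit list combinatorics -/

lemma mem_bitsOf {k p : ℕ} : p ∈ bitsOf k ↔ k.testBit p = true := by
  unfold bitsOf
  rw [mem_filter, mem_range]
  constructor
  · exact fun h => h.2
  · intro h
    refine ⟨?_, h⟩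
    by_contra hpk
    push_neg at hpk
    have : k < 2 ^ p := lt_of_le_of_lt hpk (Nat.lt_two_pow_self (n := p))
    rw [Nat.testBit_lt_two_pow this] at h
    exact Bool.noConfusion h

lemma pairwise_bitsOf (k : ℕ) : (bitsOf k).Pairwise (· < ·) :=
  (List.pairwise_lt_range (n := k)).filter _

lemma eq_of_sorted {l₁ l₂ : List ℕ} (h₁ : l₁.Pairwise (· < ·)) (h₂ : l₂.Pairwise (· < ·))
    (h : ∀ p, p ∈ l₁ ↔ p ∈ l₂) : l₁ = l₂ := by
  have nd₁ : l₁.Nodup := h₁.imp (fun h => ne_of_lt h)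
  have nd₂ : l₂.Nodup := h₂.imp (fun h => ne_of_lt h)
  exact List.Perm.eq_of_pairwise' (h₁.imp le_of_lt) (h₂.imp le_of_lt)
    ((List.perm_ext_iff_of_nodup nd₁ nd₂).2 h)

lemma bitsOf_two_mul (m : ℕ) : bitsOf (2 * m) = (bitsOf m).map (· + 1) := by
  apply eq_of_sorted (pairwise_bitsOf _)
  · exact (pairwise_bitsOf m).map _ (fun a b h => by omega)
  · intro p
    rw [mem_bitsOf, mem_map]
    cases p with
    | zero =>
      have h2 : (2 * m) % 2 = 0 := by omega
      simp [Nat.testBit_zero, h2]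
    | succ p =>
      rw [Nat.testBit_succ, Nat.mul_div_cancel_left m (by norm_num)]
      rw [← mem_bitsOf]
      constructor
      · exact fun h => ⟨p, h, rfl⟩
      · rintro ⟨q, hq, hqe⟩
        have : q = p := by omega
        rwa [this] at hq

lemma bitsOf_two_mul_add_one (m : ℕ) :
    bitsOf (2 * m + 1) = 0 :: (bitsOf m).map (· + 1) := by
  apply eq_of_sorted (pairwise_bitsOf _)
  · rw [pairwise_cons]
    refine ⟨?_, (pairwise_bitsOf m).map _ (fun a b h => by omega)⟩
    intro a ha
    rw [mem_map] at ha
    obtain ⟨q, _, hq⟩ := ha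
    omega
  · intro p
    rw [mem_bitsOf, mem_cons, mem_map]
    cases p with
    | zero =>
      have h2 : (2 * m + 1) % 2 = 1 := by omega
      simp [Nat.testBit_zero, h2]
    | succ p =>
      rw [Nat.testBit_succ, show (2 * m + 1) / 2 = m by omega, ← mem_bitsOf]
      constructor
      · exact fun h => Or.inr ⟨p, h, rfl⟩
      · rintro (h | ⟨q, hq, hqe⟩)
        · exact absurd h (by omega)
        · have : q = p := by omega
          rwa [this] at hq

lemma carry : ∀ ℓ : ℕ, ∃ r L, bitsOf ℓ = range r ++ L ∧ bitsOf (ℓ + 1) = r :: L := by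
  intro ℓ
  induction ℓ using Nat.strong_induction_on with
  | _ ℓ ih =>
    rcases Nat.even_or_odd ℓ with ⟨m, hm⟩ | ⟨m, hm⟩
    · refine ⟨0, bitsOf ℓ, by simp, ?_⟩
      rw [show ℓ + 1 = 2 * m + 1 by omega, bitsOf_two_mul_add_one,
        show ℓ = 2 * m by omega, bitsOf_two_mul]
    · obtain ⟨r, L, h1, h2⟩ := ih m (by omega)
      refine ⟨r + 1, L.map (· + 1), ?_, ?_⟩
      · rw [show ℓ = 2 * m + 1 by omega, bitsOf_two_mul_add_one, h1, map_append,
          range_succ_eq_map]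
        simp [Nat.succ_eq_add_one]
      · rw [show ℓ + 1 = 2 * (m + 1) by omega, bitsOf_two_mul, h2, map_cons]

/- ## Sums of powers of two -/

abbrev sumPow (l : List ℕ) : ℕ := (l.map (fun p => 2 ^ p)).sum

lemma sumPow_append (l₁ l₂ : List ℕ) : sumPow (l₁ ++ l₂) = sumPow l₁ + sumPow l₂ := by
  simp [sumPow]

lemma sumPow_reverse (l : List ℕ) : sumPow l.reverse = sumPow l := by
  unfold sumPow
  rw [List.map_reverse, List.sum_reverse]

lemma sumPow_range (i : ℕ) : sumPow (range i) + 1 = 2 ^ i := by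
  induction i with
  | zero => simp [sumPow]
  | succ i ih =>
    rw [List.range_succ, sumPow_append]
    have : (2:ℕ) ^ (i + 1) = 2 ^ i + 2 ^ i := by rw [pow_succ]; omega
    simp [sumPow] at ih ⊢
    omega

lemma sumPow_drop_range {j r : ℕ} (h : j ≤ r) :
    sumPow ((range r).drop j) + 2 ^ j = 2 ^ r := by
  have hsplit : (range r).take j ++ (range r).drop j = range r := List.take_append_drop _ _
  have := congrArg sumPow hsplit
  rw [sumPow_append, List.take_range, show min j r = j by omega] at this
  have h1 := sumPow_range j
  have h2 := sumPow_range r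
  omega


variable {K : Type*} [Field K]

lemma Adeg_mul (a b : ℕ) : Adeg K a * Adeg K b = Adeg K (a + b) := (pow_add _ a b).symm

lemma Adeg_zero : Adeg K 0 = 1 := pow_zero _

variable (U : ℕ → Submodule K (FreeAlgebra K (Fin 2)))

lemma habs_left (habs : ∀ m, Adeg K (2 ^ m) * U m + U m * Adeg K (2 ^ m) ≤ U (m + 1))
    (m : ℕ) : Adeg K (2 ^ m) * U m ≤ U (m + 1) :=
  le_trans (by rw [Submodule.add_eq_sup]; exact le_sup_left) (habs m)

lemma habs_right (habs : ∀ m, Adeg K (2 ^ m) * U m + U m * Adeg K (2 ^ m) ≤ U (m + 1))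
    (m : ℕ) : U m * Adeg K (2 ^ m) ≤ U (m + 1) :=
  le_trans (by rw [Submodule.add_eq_sup]; exact le_sup_right) (habs m)

lemma Ult_le (k n : ℕ) (h : n < (bitsOf k).length) (a b x : ℕ)
    (hx : (bitsOf k).get ⟨n, h⟩ = x)
    (ha : sumPow ((bitsOf k).take n) = a)
    (hb : sumPow ((bitsOf k).drop (n + 1)) = b) :
    Adeg K a * U x * Adeg K b ≤ Ult K U k := by
  subst hx ha hb
  exact le_iSup (fun i : Fin (bitsOf k).length =>
    Adeg K (((bitsOf k).take i.val).map (fun p => 2 ^ p)).sum * U ((bitsOf k).get i) *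
      Adeg K (((bitsOf k).drop (i.val + 1)).map (fun p => 2 ^ p)).sum) ⟨n, h⟩

lemma Ugt_le (k n : ℕ) (h : n < (bitsOf k).reverse.length) (a b x : ℕ)
    (hx : (bitsOf k).reverse.get ⟨n, h⟩ = x)
    (ha : sumPow ((bitsOf k).reverse.take n) = a)
    (hb : sumPow ((bitsOf k).reverse.drop (n + 1)) = b) :
    Adeg K a * U x * Adeg K b ≤ Ugt K U k := by
  subst hx ha hb
  exact le_iSup (fun i : Fin (bitsOf k).reverse.length =>
    Adeg K (((bitsOf k).reverse.take i.val).map (fun p => 2 ^ p)).sum *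
      U ((bitsOf k).reverse.get i) *
      Adeg K (((bitsOf k).reverse.drop (i.val + 1)).map (fun p => 2 ^ p)).sum) ⟨n, h⟩

lemma core_lt (habs : ∀ m, Adeg K (2 ^ m) * U m + U m * Adeg K (2 ^ m) ≤ U (m + 1))
    (ℓ : ℕ) : Adeg K 1 * Ult K U ℓ ≤ Ult K U (ℓ + 1) := by
  obtain ⟨r, L, hB, hB'⟩ := carry ℓ
  -- helper: absorb a carry through the run of trailing ones
  have H : ∀ d j m, j + d = r → 2 ^ j + m = 2 ^ r →
      U j * Adeg K (m + sumPow L) ≤ Ult K U (ℓ + 1) := by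
    intro d
    induction d with
    | zero =>
      intro j m hj hm
      obtain rfl : j = r := by omega
      obtain rfl : m = 0 := by omega
      have hlen : 0 < (bitsOf (ℓ + 1)).length := by rw [hB']; simp
      have := Ult_le U (ℓ + 1) 0 hlen 0 (sumPow L) j
        (by simp [List.get_eq_getElem, hB']) (by simp [sumPow]) (by simp [hB'])
      rw [Adeg_zero, one_mul] at this
      simpa using this
    | succ d ih =>
      intro j m hj hm
      have hpow : (2:ℕ) ^ (j + 1) = 2 ^ j + 2 ^ j := by rw [pow_succ]; omega
      have hle : (2:ℕ) ^ (j + 1) ≤ 2 ^ r := Nat.pow_le_pow_right (by norm_num) (by omega)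
      obtain ⟨m', rfl⟩ : ∃ m', m = 2 ^ j + m' := ⟨m - 2 ^ j, by omega⟩
      have hm'' : 2 ^ (j + 1) + m' = 2 ^ r := by omega
      calc U j * Adeg K (2 ^ j + m' + sumPow L)
          = U j * Adeg K (2 ^ j) * Adeg K (m' + sumPow L) := by
            rw [mul_assoc, Adeg_mul]; congr 2; omega
        _ ≤ U (j + 1) * Adeg K (m' + sumPow L) :=
            mul_le_mul' (habs_right U habs j) le_rfl
        _ ≤ Ult K U (ℓ + 1) := ih (j + 1) m' (by omega) hm''
  rw [Ult, Submodule.mul_iSup]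
  apply iSup_le
  intro i
  obtain ⟨n, hn⟩ := i
  show Adeg K 1 * (Adeg K (sumPow ((bitsOf ℓ).take n)) * U ((bitsOf ℓ).get ⟨n, hn⟩) *
      Adeg K (sumPow ((bitsOf ℓ).drop (n + 1)))) ≤ Ult K U (ℓ + 1)
  have hlenB : (bitsOf ℓ).length = r + L.length := by rw [hB]; simp
  rcases lt_or_ge n r with hi | hi
  · -- n lies in the run of trailing ones
    have hget : (bitsOf ℓ).get ⟨n, hn⟩ = n := by
      simp only [List.get_eq_getElem]
      rw [List.getElem_of_eq hB, List.getElem_append_left (by simpa using hi)]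
      simp
    have htake : (bitsOf ℓ).take n = List.range n := by
      rw [hB, List.take_append_of_le_length (by simp; omega), List.take_range]
      congr 1; omega
    have hdrop : (bitsOf ℓ).drop (n + 1) = (List.range r).drop (n + 1) ++ L := by
      rw [hB, List.drop_append_of_le_length (by simp; omega)]
    rw [hget, htake, hdrop, sumPow_append]
    have h1 : sumPow (List.range n) + 1 = 2 ^ n := sumPow_range _
    have h2 : sumPow ((List.range r).drop (n + 1)) + 2 ^ (n + 1) = 2 ^ r :=
      sumPow_drop_range (by omega)
    calc Adeg K 1 * (Adeg K (sumPow (List.range n)) * U n *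
            Adeg K (sumPow ((List.range r).drop (n + 1)) + sumPow L))
        = Adeg K (2 ^ n) * U n *
            Adeg K (sumPow ((List.range r).drop (n + 1)) + sumPow L) := by
          rw [← mul_assoc, ← mul_assoc, Adeg_mul]; congr 3; omega
      _ ≤ U (n + 1) * Adeg K (sumPow ((List.range r).drop (n + 1)) + sumPow L) :=
          mul_le_mul' (habs_left U habs _) le_rfl
      _ ≤ Ult K U (ℓ + 1) :=
          H (r - (n + 1)) (n + 1) _ (by omega) (by omega)
  · -- n beyond the run: matches the (n - r + 1)-st term of Ult (ℓ+1)
    obtain ⟨s, rfl⟩ : ∃ s, n = r + s := ⟨n - r, by omega⟩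
    have hs : s < L.length := by omega
    have hget : (bitsOf ℓ).get ⟨r + s, hn⟩ = L[s]'hs := by
      simp only [List.get_eq_getElem]
      rw [List.getElem_of_eq hB, List.getElem_append_right (by simp)]
      simp
    have htake : (bitsOf ℓ).take (r + s) = List.range r ++ L.take s := by
      rw [hB, show r + s = (List.range r).length + s by simp, List.take_length_add_append]
    have hdrop : (bitsOf ℓ).drop (r + s + 1) = L.drop (s + 1) := by
      rw [hB, show r + s + 1 = (List.range r).length + (s + 1) by simp only [List.length_range]; omega, List.drop_length_add_append]
    rw [hget, htake, hdrop, sumPow_append]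
    have h1 : sumPow (List.range r) + 1 = 2 ^ r := sumPow_range _
    have hn' : s + 1 < (bitsOf (ℓ + 1)).length := by rw [hB']; simp; omega
    calc Adeg K 1 * (Adeg K (sumPow (List.range r) + sumPow (L.take s)) *
            U (L[s]'hs) * Adeg K (sumPow (L.drop (s + 1))))
        = Adeg K (2 ^ r + sumPow (L.take s)) * U (L[s]'hs) *
            Adeg K (sumPow (L.drop (s + 1))) := by
          rw [← mul_assoc, ← mul_assoc, Adeg_mul]; congr 3; omega
      _ ≤ Ult K U (ℓ + 1) := by
          apply Ult_le U (ℓ + 1) (s + 1) hn'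
          · simp [List.get_eq_getElem, hB']
          · simp [hB', sumPow, pow_succ]
          · simp [hB']

lemma core_gt (habs : ∀ m, Adeg K (2 ^ m) * U m + U m * Adeg K (2 ^ m) ≤ U (m + 1))
    (k : ℕ) : Ugt K U k * Adeg K 1 ≤ Ugt K U (k + 1) := by
  obtain ⟨r, L, hB, hB'⟩ := carry k
  have hBrev : (bitsOf k).reverse = L.reverse ++ (List.range r).reverse := by
    rw [hB, List.reverse_append]
  have hBrev' : (bitsOf (k + 1)).reverse = L.reverse ++ [r] := by
    rw [hB']; simp
  have H : ∀ d j m, j + d = r → 2 ^ j + m = 2 ^ r →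
      Adeg K (sumPow L + m) * U j ≤ Ugt K U (k + 1) := by
    intro d
    induction d with
    | zero =>
      intro j m hj hm
      obtain rfl : j = r := by omega
      obtain rfl : m = 0 := by omega
      have hlen : L.length < (bitsOf (k + 1)).reverse.length := by rw [hBrev']; simp
      have := Ugt_le U (k + 1) L.length hlen (sumPow L) 0 j
        (by simp only [List.get_eq_getElem]
            rw [List.getElem_of_eq hBrev', List.getElem_append_right (by simp)]
            simp)
        (by rw [hBrev', List.take_append_of_le_length (by simp),
              List.take_of_length_le (by simp), sumPow_reverse])
        (by rw [hBrev', show L.length + 1 = L.reverse.length + 1 by simp, List.drop_length_add_append]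
            simp [sumPow])
      rw [Adeg_zero, mul_one] at this
      simpa using this
    | succ d ih =>
      intro j m hj hm
      have hpow : (2:ℕ) ^ (j + 1) = 2 ^ j + 2 ^ j := by rw [pow_succ]; omega
      have hle : (2:ℕ) ^ (j + 1) ≤ 2 ^ r := Nat.pow_le_pow_right (by norm_num) (by omega)
      obtain ⟨m', rfl⟩ : ∃ m', m = 2 ^ j + m' := ⟨m - 2 ^ j, by omega⟩
      have hm'' : 2 ^ (j + 1) + m' = 2 ^ r := by omega
      calc Adeg K (sumPow L + (2 ^ j + m')) * U j
          = Adeg K (sumPow L + m') * (Adeg K (2 ^ j) * U j) := by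
            rw [← mul_assoc, Adeg_mul]; congr 2; omega
        _ ≤ Adeg K (sumPow L + m') * U (j + 1) :=
            mul_le_mul' le_rfl (habs_left U habs j)
        _ ≤ Ugt K U (k + 1) := ih (j + 1) m' (by omega) hm''
  rw [Ugt, Submodule.iSup_mul]
  apply iSup_le
  intro i
  obtain ⟨n, hn⟩ := i
  show Adeg K (sumPow ((bitsOf k).reverse.take n)) * U ((bitsOf k).reverse.get ⟨n, hn⟩) *
      Adeg K (sumPow ((bitsOf k).reverse.drop (n + 1))) * Adeg K 1 ≤ Ugt K U (k + 1)
  have hlenB : (bitsOf k).reverse.length = L.length + r := by rw [hBrev]; simp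
  rcases lt_or_ge n L.length with hi | hi
  · -- n within the reversed-L part: matches the n-th term of Ugt (k+1)
    have hrev : n < L.reverse.length := by simpa using hi
    have hget : (bitsOf k).reverse.get ⟨n, hn⟩ = L.reverse[n]'hrev := by
      simp only [List.get_eq_getElem]
      rw [List.getElem_of_eq hBrev, List.getElem_append_left hrev]
    have htake : (bitsOf k).reverse.take n = L.reverse.take n := by
      rw [hBrev, List.take_append_of_le_length (by simp; omega)]
    have hdrop : (bitsOf k).reverse.drop (n + 1)
        = L.reverse.drop (n + 1) ++ (List.range r).reverse := by
      rw [hBrev, List.drop_append_of_le_length (by simp; omega)]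
    rw [hget, htake, hdrop, sumPow_append, sumPow_reverse]
    have h1 : sumPow (List.range r) + 1 = 2 ^ r := sumPow_range _
    calc Adeg K (sumPow (L.reverse.take n)) * U (L.reverse[n]'hrev) *
            Adeg K (sumPow (L.reverse.drop (n + 1)) + sumPow (List.range r)) * Adeg K 1
        = Adeg K (sumPow (L.reverse.take n)) * U (L.reverse[n]'hrev) *
            Adeg K (sumPow (L.reverse.drop (n + 1)) + 2 ^ r) := by
          rw [mul_assoc, Adeg_mul]; congr 2; omega
      _ ≤ Ugt K U (k + 1) := by
          apply Ugt_le U (k + 1) n (by rw [hBrev']; simp; omega)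
          · simp only [List.get_eq_getElem]
            rw [List.getElem_of_eq hBrev', List.getElem_append_left hrev]
          · rw [hBrev', List.take_append_of_le_length (by simp; omega)]
          · rw [hBrev', List.drop_append_of_le_length (by simp; omega), sumPow_append]
            simp [sumPow]
  · -- n within the reversed run of ones
    obtain ⟨s, rfl⟩ : ∃ s, n = L.length + s := ⟨n - L.length, by omega⟩
    have hs : s < r := by omega
    have hget : (bitsOf k).reverse.get ⟨L.length + s, hn⟩ = r - 1 - s := by
      simp only [List.get_eq_getElem]
      rw [List.getElem_of_eq hBrev, List.getElem_append_right (by simp)]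
      simp [List.getElem_reverse, List.getElem_range]
    have htake : (bitsOf k).reverse.take (L.length + s)
        = L.reverse ++ ((List.range r).drop (r - s)).reverse := by
      rw [hBrev, show L.length + s = L.reverse.length + s by simp, List.take_length_add_append,
        List.take_reverse, List.length_range]
    have hdrop : (bitsOf k).reverse.drop (L.length + s + 1)
        = (List.range (r - s - 1)).reverse := by
      rw [hBrev, show L.length + s + 1 = L.reverse.length + (s + 1) by simp only [List.length_reverse]; omega, List.drop_length_add_append,
        List.drop_reverse, List.length_range, List.take_range]
      congr 2
      omega
    rw [hget, htake, hdrop, sumPow_append]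
    simp only [sumPow_reverse]
    set j := r - 1 - s with hjdef
    have h1 : sumPow ((List.range r).drop (r - s)) + 2 ^ (j + 1) = 2 ^ r := by
      rw [show j + 1 = r - s by omega]; exact sumPow_drop_range (by omega)
    have h2 : sumPow (List.range (r - s - 1)) + 1 = 2 ^ j := by
      rw [show r - s - 1 = j by omega]; exact sumPow_range _
    calc Adeg K (sumPow L + sumPow ((List.range r).drop (r - s))) * U j *
            Adeg K (sumPow (List.range (r - s - 1))) * Adeg K 1
        = Adeg K (sumPow L + sumPow ((List.range r).drop (r - s))) *
            (U j * Adeg K (2 ^ j)) := by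
          rw [mul_assoc, mul_assoc, Adeg_mul, h2]
      _ ≤ Adeg K (sumPow L + sumPow ((List.range r).drop (r - s))) * U (j + 1) :=
          mul_le_mul' le_rfl (habs_right U habs j)
      _ ≤ Ugt K U (k + 1) := H (r - (j + 1)) (j + 1) _ (by omega) (by omega)

end Stmt6Aux

/-- Lemma 1.2 (second part): for all `k, ℓ`, `A(k)·U^<(ℓ) ⊆ U^<(k+ℓ)` and
`U^>(k)·A(ℓ) ⊆ U^>(k+ℓ)`. -/
theorem stmt6 {K : Type*} [Field K]
    (U V : ℕ → Submodule K (FreeAlgebra K (Fin 2)))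
    (hUA : ∀ m, U m ≤ Adeg K (2 ^ m)) (hVA : ∀ m, V m ≤ Adeg K (2 ^ m))
    (hV0 : V 0 = Adeg K 1) (hU0 : U 0 = ⊥)
    (hVmon : ∀ m, ∃ S : Set (FreeAlgebra K (Fin 2)),
      (∀ x ∈ S, IsMonomial K x) ∧ V m = Submodule.span K S)
    (hsum : ∀ m, V m ⊔ U m = Adeg K (2 ^ m)) (hint : ∀ m, V m ⊓ U m = ⊥)
    (habs : ∀ m, Adeg K (2 ^ m) * U m + U m * Adeg K (2 ^ m) ≤ U (m + 1))
    (hVV : ∀ m, V (m + 1) ≤ V m * V m) :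
    ∀ k ℓ : ℕ,
      Adeg K k * Ult K U ℓ ≤ Ult K U (k + ℓ) ∧
      Ugt K U k * Adeg K ℓ ≤ Ugt K U (k + ℓ) := by
  intro k ℓ
  constructor
  · induction k with
    | zero =>
      rw [show Adeg K 0 = 1 from pow_zero _, one_mul, Nat.zero_add]
    | succ k ih =>
      have h1 : Adeg K (k + 1) = Adeg K 1 * Adeg K k := by
        rw [Stmt6Aux.Adeg_mul, Nat.add_comm]
      calc Adeg K (k + 1) * Ult K U ℓ
          = Adeg K 1 * (Adeg K k * Ult K U ℓ) := by rw [h1, mul_assoc]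
        _ ≤ Adeg K 1 * Ult K U (k + ℓ) := mul_le_mul' le_rfl ih
        _ ≤ Ult K U (k + ℓ + 1) := Stmt6Aux.core_lt U habs _
        _ = Ult K U (k + 1 + ℓ) := by congr 1 <;> omega
  · induction ℓ with
    | zero =>
      rw [show Adeg K 0 = 1 from pow_zero _, mul_one, Nat.add_zero]
    | succ ℓ ih =>
      calc Ugt K U k * Adeg K (ℓ + 1)
          = Ugt K U k * Adeg K ℓ * Adeg K 1 := by rw [mul_assoc, Stmt6Aux.Adeg_mul]
        _ ≤ Ugt K U (k + ℓ) * Adeg K 1 := mul_le_mul' ih le_rfl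
        _ ≤ Ugt K U (k + ℓ + 1) := Stmt6Aux.core_gt U habs _
        _ = Ugt K U (k + (ℓ + 1)) := by congr 1 <;> omega
end

section
/- Let Y ⊆ ℕ and let (r_n)_{n∈Y} be natural numbers such that for all m, n ∈ Y ∪ {0} with m < n: 2^{3n+4}·r_m^{33} < r_n < 2^{2^{n−m−3}} (with r_0 interpreted appropriately so the left inequality gives r_n > 2^{3n+4}). Then for all n ∈ Y, 2^{3n+4}·∏_{i∈Y, i<n} r_i^{32} < r_n. -/
/-- Lemma 3.3 (arithmetic): if `Y ⊆ ℕ` consists of numbers `≥ 8`, `r 0 = 1`, and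
for all `m < n` in `Y ∪ {0}` one has `2^{3n+4} r_m^{33} < r_n < 2^{2^{n-m-3}}`, then
for all `n ∈ Y`, `2^{3n+4} ∏_{i ∈ Y, i < n} r_i^{32} < r_n`. -/
theorem stmt8 (Y : Set ℕ) [DecidablePred (· ∈ Y)] (r : ℕ → ℕ)
    (hr0 : r 0 = 1) (hY8 : ∀ i ∈ Y, 8 ≤ i)
    (h : ∀ m n : ℕ, m ∈ Y ∪ {0} → n ∈ Y ∪ {0} → m < n →
      2 ^ (3 * n + 4) * r m ^ 33 < r n ∧ r n < 2 ^ 2 ^ (n - m - 3)) :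
    ∀ n ∈ Y,
      2 ^ (3 * n + 4) * ∏ i ∈ (Finset.range n).filter (· ∈ Y), r i ^ 32 < r n := by
  intro n
  induction n using Nat.strong_induction_on with
  | _ n ih =>
  intro hn
  set S := (Finset.range n).filter (· ∈ Y) with hS
  by_cases hSe : S = ∅
  · rw [hSe]
    simpa [hr0] using (h 0 n (Or.inr rfl) (Or.inl hn)
      (lt_of_lt_of_le (by norm_num) (hY8 n hn))).1
  · obtain hne := Finset.nonempty_iff_ne_empty.mpr hSe
    set m := S.max' hne with hm
    have hmS : m ∈ S := S.max'_mem hne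
    have hmY : m ∈ Y := (Finset.mem_filter.mp hmS).2
    have hmn : m < n := Finset.mem_range.mp (Finset.mem_filter.mp hmS).1
    have hprod : ∏ i ∈ S, r i ^ 32 =
        (∏ i ∈ (Finset.range m).filter (· ∈ Y), r i ^ 32) * r m ^ 32 := by
      rw [← Finset.prod_erase_mul S _ hmS]
      congr 1
      apply Finset.prod_congr _ (fun _ _ => rfl)
      ext i
      simp only [Finset.mem_erase, Finset.mem_filter, Finset.mem_range, hS]
      constructor
      · rintro ⟨hne', hi, hiY⟩
        exact ⟨lt_of_le_of_ne (Finset.le_max' S i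
          (by simp [hS, Finset.mem_filter, hi, hiY])) hne', hiY⟩
      · rintro ⟨hi, hiY⟩
        exact ⟨Nat.ne_of_lt hi, hi.trans hmn, hiY⟩
    have ihm := ih m hmn hmY
    have hrm_pos : 0 < r m := by
      have := (h 0 m (Or.inr rfl) (Or.inl hmY)
        (lt_of_lt_of_le (by norm_num) (hY8 m hmY))).1
      omega
    have hlt : ∏ i ∈ (Finset.range m).filter (· ∈ Y), r i ^ 32 < r m := by
      calc ∏ i ∈ (Finset.range m).filter (· ∈ Y), r i ^ 32
          ≤ 2 ^ (3*m+4) * ∏ i ∈ (Finset.range m).filter (· ∈ Y), r i ^ 32 :=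
            Nat.le_mul_of_pos_left _ (by positivity)
        _ < r m := ihm
    have key := (h m n (Or.inl hmY) (Or.inl hn) hmn).1
    calc 2 ^ (3 * n + 4) * ∏ i ∈ S, r i ^ 32
        = 2 ^ (3*n+4) * ((∏ i ∈ (Finset.range m).filter (· ∈ Y), r i ^ 32) * r m ^ 32) := by
          rw [hprod]
      _ < 2 ^ (3*n+4) * (r m * r m ^ 32) := by
          have h32 : 0 < r m ^ 32 := by positivity
          exact Nat.mul_lt_mul_of_le_of_lt (le_refl _)
            (Nat.mul_lt_mul_of_lt_of_le hlt (le_refl _) h32) (by positivity)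
      _ = 2 ^ (3*n+4) * r m ^ 33 := by ring
      _ < r n := key
end
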